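/- arXiv:2409.00697 — 6 statements merged into one kernel-verified Lean document; each statement's English description precedes it below -/
import Mathlib

section
/- For all integers p, r ≥ 4, Γρ(P_p ∨ P_r) = Γρ(P_p ∨ C_r) = Γρ(C_p ∨ C_r) = p + r − min{⌈p/3⌉, ⌈r/3⌉} + 1, where P_m and C_m denote the path and cycle on m vertices and ∨ denotes the join of graphs. -/
open SimpleGraph

/-- A packing `k`-coloring of `G`: colors in `{1,…,k}` and vertices of equal color `i`
are at distance greater than `i` (vertices in different components are unconstrained). -/
def IsPackingColoring {V : Type*} (G : SimpleGraph V) (k : ℕ) (c : V → ℕ) : Prop :=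
  (∀ v, 1 ≤ c v ∧ c v ≤ k) ∧
  ∀ u v, u ≠ v → c u = c v → G.Reachable u v → c u < G.dist u v

/-- A greedy packing `k`-coloring: a packing `k`-coloring that uses color `k` and in which
every vertex of color `i ≥ 2` has, for every `j < i`, a vertex of color `j`
at distance at most `j`. -/
def IsGreedyPackingColoring {V : Type*} (G : SimpleGraph V) (k : ℕ) (c : V → ℕ) : Prop :=
  IsPackingColoring G k c ∧ (∃ v, c v = k) ∧
  ∀ v, ∀ j, 1 ≤ j → j < c v → ∃ u, c u = j ∧ G.Reachable u v ∧ G.dist u v ≤ j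

/-- The Grundy packing chromatic number: the largest `k` admitting a greedy packing
`k`-coloring. -/
noncomputable def grundyPackingChromaticNumber {V : Type*} (G : SimpleGraph V) : ℕ :=
  sSup {k | ∃ c : V → ℕ, IsGreedyPackingColoring G k c}

/-- The packing chromatic number: the smallest `k` admitting a packing `k`-coloring. -/
noncomputable def packingChromaticNumber {V : Type*} (G : SimpleGraph V) : ℕ :=
  sInf {k | ∃ c : V → ℕ, IsPackingColoring G k c}

/-- `s` is an independent set of `G`. -/
def IsIndepFinset {V : Type*} (G : SimpleGraph V) (s : Finset V) : Prop :=
  ∀ u ∈ s, ∀ v ∈ s, ¬ G.Adj u v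

/-- `s` is a maximal independent set of `G`. -/
def IsMaxIndepFinset {V : Type*} (G : SimpleGraph V) (s : Finset V) : Prop :=
  IsIndepFinset G s ∧ ∀ t : Finset V, IsIndepFinset G t → s ⊆ t → s = t

/-- The independent domination number `i(G)`:
the minimum cardinality of a maximal independent set. -/
noncomputable def indepDomNum {V : Type*} (G : SimpleGraph V) [Fintype V] : ℕ :=
  sInf {n | ∃ s : Finset V, IsMaxIndepFinset G s ∧ s.card = n}

/-- The graph `G^ℓ`: same vertices, `u ∼ v` iff `u ≠ v` and `d_G(u,v) ≤ ℓ`. -/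
def distPow {V : Type*} (G : SimpleGraph V) (ℓ : ℕ) : SimpleGraph V where
  Adj u v := u ≠ v ∧ G.dist u v ≤ ℓ
  symm := by
    constructor
    rintro u v ⟨h1, h2⟩
    exact ⟨h1.symm, by rwa [SimpleGraph.dist_comm]⟩
  loopless := by constructor; rintro v ⟨h, _⟩; exact h rfl

/-- The graph `G(k)`: vertex set is `k` disjoint copies of `V(G)`, the copy `i : Fin k`
playing the role of `G^(i+1)`; the `k` copies of each vertex form a clique, and within the
`i`-th copy two distinct vertices are adjacent iff their distance in `G` is at most `i+1`. -/
def levelGraph {V : Type*} (G : SimpleGraph V) (k : ℕ) : SimpleGraph (V × Fin k) where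
  Adj p q := (p.1 = q.1 ∧ p.2 ≠ q.2) ∨
    (p.1 ≠ q.1 ∧ p.2 = q.2 ∧ G.dist p.1 q.1 ≤ (p.2 : ℕ) + 1)
  symm := by
    constructor
    rintro p q (⟨h1, h2⟩ | ⟨h1, h2, h3⟩)
    · exact Or.inl ⟨h1.symm, h2.symm⟩
    · refine Or.inr ⟨h1.symm, h2.symm, ?_⟩
      rw [SimpleGraph.dist_comm, ← h2]
      exact h3
  loopless := by constructor; rintro p (⟨_, h⟩ | ⟨h, _, _⟩) <;> exact h rfl

/-- `A` is a maximal independent set of the subgraph of `H` induced on `S`. -/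
def IsMaxIndepSetOn {V : Type*} (H : SimpleGraph V) (S : Set V) (A : Set V) : Prop :=
  A ⊆ S ∧ (∀ u ∈ A, ∀ v ∈ A, ¬ H.Adj u v) ∧
  ∀ B : Set V, B ⊆ S → (∀ u ∈ B, ∀ v ∈ B, ¬ H.Adj u v) → A ⊆ B → A = B

/-- The eccentricity of a vertex. -/
noncomputable def eccent {V : Type*} (G : SimpleGraph V) [Fintype V] (v : V) : ℕ :=
  Finset.univ.sup (fun u => G.dist v u)

/-- The radius of a graph. -/
noncomputable def graphRadius {V : Type*} (G : SimpleGraph V) [Fintype V] : ℕ :=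
  sInf (Set.range (eccent G))

/-- The diameter of a graph. -/
noncomputable def graphDiam {V : Type*} (G : SimpleGraph V) [Fintype V] : ℕ :=
  Finset.univ.sup (eccent G)

/-- The diametrical graph `D(G)`: `x ∼ y` iff `d_G(x,y) = diam(G)`. -/
noncomputable def diamGraph {V : Type*} (G : SimpleGraph V) [Fintype V] : SimpleGraph V where
  Adj u v := u ≠ v ∧ G.dist u v = graphDiam G
  symm := by
    constructor
    rintro u v ⟨h1, h2⟩
    exact ⟨h1.symm, by rwa [SimpleGraph.dist_comm]⟩
  loopless := by constructor; rintro v ⟨h, _⟩; exact h rfl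

/-- `Q` is a clique of the subgraph of `H` induced on `S`. -/
def IsCliqueFinsetOn {V : Type*} (H : SimpleGraph V) (S : Set V) (Q : Finset V) : Prop :=
  ↑Q ⊆ S ∧ ∀ u ∈ Q, ∀ v ∈ Q, u ≠ v → H.Adj u v

/-- `Q` is a maximal clique of the subgraph of `H` induced on `S`. -/
def IsMaxCliqueFinsetOn {V : Type*} (H : SimpleGraph V) (S : Set V) (Q : Finset V) : Prop :=
  IsCliqueFinsetOn H S Q ∧ ∀ R : Finset V, IsCliqueFinsetOn H S R → Q ⊆ R → Q = R

/-- The join `G ∨ H` of two graphs. -/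
def joinGraph {V W : Type*} (G : SimpleGraph V) (H : SimpleGraph W) :
    SimpleGraph (V ⊕ W) where
  Adj p q := match p, q with
    | .inl u, .inl v => G.Adj u v
    | .inr u, .inr v => H.Adj u v
    | .inl _, .inr _ => True
    | .inr _, .inl _ => True
  symm := by
    constructor
    rintro (u | u) (v | v) h
    · exact G.adj_symm h
    · trivial
    · trivial
    · exact H.adj_symm h
  loopless := by
    constructor
    rintro (u | u) h
    · exact G.irrefl h
    · exact H.irrefl h

/-- `K_{n,n}` minus a perfect matching: parts `{u_i}` and `{v_i}`, with `u_i ∼ v_j` iff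
`i ≠ j`. -/
def completeBipartiteMinusMatching (n : ℕ) : SimpleGraph (Fin n ⊕ Fin n) where
  Adj p q := match p, q with
    | .inl i, .inr j => i ≠ j
    | .inr i, .inl j => i ≠ j
    | _, _ => False
  symm := by constructor; rintro (i | i) (j | j) h <;> first | exact h.symm | exact h
  loopless := by constructor; rintro (i | i) h <;> exact h


section GrundyAux

open Finset

/-- Auxiliary: `S` is independent and dominating. -/
def IndepDom {V : Type*} (G : SimpleGraph V) (S : Finset V) : Prop :=
  (∀ u ∈ S, ∀ v ∈ S, ¬ G.Adj u v) ∧ ∀ v : V, v ∈ S ∨ ∃ u ∈ S, G.Adj u v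

lemma grundy_eq {V : Type*} [Fintype V] [DecidableEq V] (J : SimpleGraph V) (m₀ : ℕ)
    (h2 : ∀ u v : V, u ≠ v → J.Reachable u v ∧ J.dist u v ≤ 2)
    (hlb : ∀ S : Finset V, IndepDom J S → m₀ ≤ S.card)
    (hex : ∃ S : Finset V, IndepDom J S ∧ S.card = m₀)
    (hm : m₀ + 1 ≤ Fintype.card V) :
    grundyPackingChromaticNumber J = Fintype.card V - m₀ + 1 := by
  classical
  obtain ⟨S, hS, hScard⟩ := hex
  set n := Fintype.card V with hn
  set q := n - m₀ with hq
  have hq1 : 1 ≤ q := by omega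
  -- upper bound
  have hub : ∀ k ∈ {k | ∃ c : V → ℕ, IsGreedyPackingColoring J k c}, k ≤ q + 1 := by
    rintro k ⟨c, ⟨⟨hbd, hpack⟩, ⟨w, hw⟩, hgreedy⟩⟩
    by_cases hk : k ≤ 1
    · omega
    push_neg at hk
    set S1 : Finset V := {v ∈ Finset.univ | c v = 1} with hS1
    set T : Finset V := {v ∈ Finset.univ | 2 ≤ c v} with hT
    have hS1mem : ∀ v, v ∈ S1 ↔ c v = 1 := by
      intro v; simp [hS1]
    have hTmem : ∀ v, v ∈ T ↔ 2 ≤ c v := by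
      intro v; simp [hT]
    have hS1id : IndepDom J S1 := by
      constructor
      · intro u hu v hv hadj
        have h1 : c u < J.dist u v :=
          hpack u v hadj.ne (by rw [(hS1mem u).mp hu, (hS1mem v).mp hv]) hadj.reachable
        rw [(hS1mem u).mp hu, SimpleGraph.dist_eq_one_iff_adj.mpr hadj] at h1
        omega
      · intro v
        by_cases hv : c v = 1
        · exact Or.inl ((hS1mem v).mpr hv)
        · have hv2 : 1 < c v := by have := (hbd v).1; omega
          obtain ⟨u, hcu, hre, hdist⟩ := hgreedy v 1 le_rfl hv2
          have hne : u ≠ v := fun h => by rw [← h, hcu] at hv2; omega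
          have hd1 : J.dist u v = 1 :=
            le_antisymm hdist (hre.pos_dist_of_ne hne)
          exact Or.inr ⟨u, (hS1mem u).mpr hcu, SimpleGraph.dist_eq_one_iff_adj.mp hd1⟩
    have hcolors : ∀ j, 2 ≤ j → j ≤ k → ∃ u ∈ T, c u = j := by
      intro j h2j hjk
      rcases eq_or_lt_of_le hjk with rfl | hlt
      · exact ⟨w, (hTmem w).mpr (by omega), hw⟩
      · obtain ⟨u, hcu, _, _⟩ := hgreedy w j (by omega) (by omega)
        exact ⟨u, (hTmem u).mpr (by omega), hcu⟩
    have hinj : Set.InjOn c T := by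
      intro u hu v hv heq
      by_contra hne
      have hr := h2 u v hne
      have := hpack u v hne heq hr.1
      have := (hTmem u).mp (by simpa using hu)
      omega
    have hsub : Finset.Icc 2 k ⊆ T.image c := by
      intro j hj
      rw [Finset.mem_Icc] at hj
      obtain ⟨u, hu, hcu⟩ := hcolors j hj.1 hj.2
      exact Finset.mem_image.mpr ⟨u, hu, hcu⟩
    have hTcard : k - 1 ≤ T.card := by
      have h1 : (Finset.Icc 2 k).card ≤ (T.image c).card := Finset.card_le_card hsub
      rw [Finset.card_image_of_injOn hinj] at h1
      simpa [Nat.card_Icc] using h1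
    have hdisj : Disjoint S1 T := by
      rw [Finset.disjoint_left]
      intro v hv hvT
      have := (hS1mem v).mp hv
      have := (hTmem v).mp hvT
      omega
    have hcard : S1.card + T.card ≤ n := by
      rw [← Finset.card_union_of_disjoint hdisj, hn]
      exact le_trans (Finset.card_le_card (Finset.subset_univ _)) (by simp)
    have := hlb S1 hS1id
    omega
  -- construction
  have hqcard : Fintype.card ↥(Sᶜ : Finset V) = q := by
    simp [Finset.card_compl, hScard]
    rfl
  let e : ↥(Sᶜ : Finset V) ≃ Fin q := Fintype.equivFinOfCardEq hqcard
  let c : V → ℕ := fun v => if h : v ∈ S then 1 else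
    (e ⟨v, Finset.mem_compl.mpr h⟩).val + 2
  have hcS : ∀ v ∈ S, c v = 1 := fun v hv => dif_pos hv
  have hcNS : ∀ v, (h : v ∉ S) → c v = (e ⟨v, Finset.mem_compl.mpr h⟩).val + 2 :=
    fun v h => dif_neg h
  have hcmem : (q + 1) ∈ {k | ∃ c : V → ℕ, IsGreedyPackingColoring J k c} := by
    refine ⟨c, ⟨⟨?_, ?_⟩, ?_, ?_⟩⟩
    · intro v
      by_cases hv : v ∈ S
      · rw [hcS v hv]; omega
      · rw [hcNS v hv]
        have := (e ⟨v, Finset.mem_compl.mpr hv⟩).isLt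
        omega
    · intro u v hne heq hre
      by_cases hu : u ∈ S <;> by_cases hv : v ∈ S
      · have hnadj : ¬ J.Adj u v := hS.1 u hu v hv
        have hpos : 1 ≤ J.dist u v := hre.pos_dist_of_ne hne
        have hne1 : J.dist u v ≠ 1 := fun h =>
          hnadj (SimpleGraph.dist_eq_one_iff_adj.mp h)
        rw [hcS u hu]; omega
      · rw [hcS u hu, hcNS v hv] at heq; omega
      · rw [hcNS u hu, hcS v hv] at heq; omega
      · exfalso
        rw [hcNS u hu, hcNS v hv] at heq
        have : e ⟨u, Finset.mem_compl.mpr hu⟩ = e ⟨v, Finset.mem_compl.mpr hv⟩ :=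
          Fin.ext (by omega)
        have := e.injective this
        exact hne (by simpa using congrArg Subtype.val this)
    · refine ⟨(e.symm ⟨q - 1, by omega⟩ : ↥(Sᶜ : Finset V)).val, ?_⟩
      set x : ↥(Sᶜ : Finset V) := e.symm ⟨q - 1, by omega⟩ with hx
      have hxS : (x : V) ∉ S := Finset.mem_compl.mp x.2
      rw [hcNS _ hxS]
      have : (⟨(x : V), Finset.mem_compl.mpr hxS⟩ : ↥(Sᶜ : Finset V)) = x := rfl
      rw [this, hx, e.apply_symm_apply]
      show q - 1 + 2 = q + 1
      omega
    · intro v j hj1 hjlt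
      have hcv2 : 2 ≤ c v := by omega
      have hvS : v ∉ S := fun h => by rw [hcS v h] at hcv2; omega
      rcases eq_or_lt_of_le hj1 with rfl | hj2
      · rcases hS.2 v with h | ⟨u, huS, hadj⟩
        · exact absurd h hvS
        · exact ⟨u, hcS u huS, hadj.reachable,
            le_of_eq (SimpleGraph.dist_eq_one_iff_adj.mpr hadj)⟩
      · have hjq : j - 2 < q := by
          rcases le_or_gt (c v) (q + 1) with h | h
          · omega
          · exfalso
            rw [hcNS v hvS] at h
            have := (e ⟨v, Finset.mem_compl.mpr hvS⟩).isLt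
            omega
        set x : ↥(Sᶜ : Finset V) := e.symm ⟨j - 2, hjq⟩ with hx
        have hxS : (x : V) ∉ S := Finset.mem_compl.mp x.2
        have hcx : c (x : V) = j := by
          rw [hcNS _ hxS]
          have : (⟨(x : V), Finset.mem_compl.mpr hxS⟩ : ↥(Sᶜ : Finset V)) = x := rfl
          rw [this, hx, e.apply_symm_apply]
          show j - 2 + 2 = j
          omega
        by_cases hxv : (x : V) = v
        · exact ⟨(x : V), hcx, hxv ▸ SimpleGraph.Reachable.refl _, by
            rw [hxv, SimpleGraph.dist_self]; omega⟩
        · obtain ⟨hre, hd⟩ := h2 (x : V) v hxv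
          exact ⟨(x : V), hcx, hre, le_trans hd (by omega)⟩
  -- conclude
  have : grundyPackingChromaticNumber J = q + 1 := by
    apply le_antisymm
    · exact csSup_le ⟨q + 1, hcmem⟩ hub
    · exact le_csSup ⟨q + 1, hub⟩ hcmem
  omega

section JoinAux

variable {V W : Type*} {G : SimpleGraph V} {H : SimpleGraph W}

lemma joinGraph_adj_lr (a : V) (b : W) : (joinGraph G H).Adj (.inl a) (.inr b) := trivial

lemma joinGraph_adj_rl (a : W) (b : V) : (joinGraph G H).Adj (.inr a) (.inl b) := trivial

lemma joinGraph_adj_ll {a b : V} : (joinGraph G H).Adj (.inl a) (.inl b) ↔ G.Adj a b := Iff.rfl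

lemma joinGraph_adj_rr {a b : W} : (joinGraph G H).Adj (.inr a) (.inr b) ↔ H.Adj a b := Iff.rfl

lemma join_reach_dist [Nonempty V] [Nonempty W] :
    ∀ u v : V ⊕ W, u ≠ v → (joinGraph G H).Reachable u v ∧ (joinGraph G H).dist u v ≤ 2 := by
  rintro (a | a) (b | b) hne
  · obtain ⟨w⟩ := ‹Nonempty W›
    let p : (joinGraph G H).Walk (.inl a) (.inl b) :=
      ((joinGraph_adj_lr a w).toWalk).append ((joinGraph_adj_lr b w).symm.toWalk)
    exact ⟨⟨p⟩, le_trans (SimpleGraph.dist_le p) (by simp [p])⟩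
  · exact ⟨(joinGraph_adj_lr a b).reachable,
      le_trans (SimpleGraph.dist_le (joinGraph_adj_lr a b).toWalk) (by simp)⟩
  · exact ⟨(joinGraph_adj_rl a b).reachable,
      le_trans (SimpleGraph.dist_le (joinGraph_adj_rl a b).toWalk) (by simp)⟩
  · obtain ⟨w⟩ := ‹Nonempty V›
    let p : (joinGraph G H).Walk (.inr a) (.inr b) :=
      ((joinGraph_adj_rl a w).toWalk).append ((joinGraph_adj_rl b w).symm.toWalk)
    exact ⟨⟨p⟩, le_trans (SimpleGraph.dist_le p) (by simp [p])⟩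

lemma join_indepDom_left [DecidableEq V] [DecidableEq W] [Nonempty V]
    (A : Finset V) (hA : IndepDom G A) :
    IndepDom (joinGraph G H) (A.image (Sum.inl : V → V ⊕ W)) ∧
      (A.image (Sum.inl : V → V ⊕ W)).card = A.card := by
  have hAne : A.Nonempty := by
    rcases hA.2 (Classical.arbitrary V) with h | ⟨u, hu, _⟩
    · exact ⟨_, h⟩
    · exact ⟨u, hu⟩
  refine ⟨⟨?_, ?_⟩, Finset.card_image_of_injective _ Sum.inl_injective⟩
  · intro u hu v hv hadj
    obtain ⟨a, ha, rfl⟩ := Finset.mem_image.mp hu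
    obtain ⟨b, hb, rfl⟩ := Finset.mem_image.mp hv
    exact hA.1 a ha b hb (joinGraph_adj_ll.mp hadj)
  · rintro (v | v)
    · rcases hA.2 v with h | ⟨u, hu, hadj⟩
      · exact Or.inl (Finset.mem_image_of_mem _ h)
      · exact Or.inr ⟨Sum.inl u, Finset.mem_image_of_mem _ hu, joinGraph_adj_ll.mpr hadj⟩
    · obtain ⟨a, ha⟩ := hAne
      exact Or.inr ⟨Sum.inl a, Finset.mem_image_of_mem _ ha, joinGraph_adj_lr a v⟩

lemma join_indepDom_right [DecidableEq V] [DecidableEq W] [Nonempty W]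
    (B : Finset W) (hB : IndepDom H B) :
    IndepDom (joinGraph G H) (B.image (Sum.inr : W → V ⊕ W)) ∧
      (B.image (Sum.inr : W → V ⊕ W)).card = B.card := by
  have hBne : B.Nonempty := by
    rcases hB.2 (Classical.arbitrary W) with h | ⟨u, hu, _⟩
    · exact ⟨_, h⟩
    · exact ⟨u, hu⟩
  refine ⟨⟨?_, ?_⟩, Finset.card_image_of_injective _ Sum.inr_injective⟩
  · intro u hu v hv hadj
    obtain ⟨a, ha, rfl⟩ := Finset.mem_image.mp hu
    obtain ⟨b, hb, rfl⟩ := Finset.mem_image.mp hv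
    exact hB.1 a ha b hb (joinGraph_adj_rr.mp hadj)
  · rintro (v | v)
    · obtain ⟨b, hb⟩ := hBne
      exact Or.inr ⟨Sum.inr b, Finset.mem_image_of_mem _ hb, joinGraph_adj_rl b v⟩
    · rcases hB.2 v with h | ⟨u, hu, hadj⟩
      · exact Or.inl (Finset.mem_image_of_mem _ h)
      · exact Or.inr ⟨Sum.inr u, Finset.mem_image_of_mem _ hu, joinGraph_adj_rr.mpr hadj⟩

lemma join_indepDom_lower [Fintype V] [Fintype W] [DecidableEq V] [DecidableEq W]
    [Nonempty V] (S : Finset (V ⊕ W)) (hS : IndepDom (joinGraph G H) S) :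
    (∃ A : Finset V, IndepDom G A ∧ A.card = S.card) ∨
    (∃ B : Finset W, IndepDom H B ∧ B.card = S.card) := by
  classical
  have hSne : S.Nonempty := by
    rcases hS.2 (Sum.inl (Classical.arbitrary V)) with h | ⟨u, hu, _⟩
    · exact ⟨_, h⟩
    · exact ⟨u, hu⟩
  obtain ⟨s₀, hs₀⟩ := hSne
  rcases s₀ with a₀ | b₀
  · -- all of S is in the left part
    left
    have hall : ∀ x ∈ S, ∃ a : V, x = Sum.inl a := by
      rintro (a | b) hx
      · exact ⟨a, rfl⟩
      · exact absurd (joinGraph_adj_lr a₀ b) (hS.1 _ hs₀ _ hx)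
    refine ⟨{a ∈ (Finset.univ : Finset V) | Sum.inl a ∈ S}, ⟨?_, ?_⟩, ?_⟩
    · intro u hu v hv hadj
      exact hS.1 _ (Finset.mem_filter.mp hu).2 _ (Finset.mem_filter.mp hv).2
        (joinGraph_adj_ll.mpr hadj)
    · intro v
      rcases hS.2 (Sum.inl v) with h | ⟨u, hu, hadj⟩
      · exact Or.inl (Finset.mem_filter.mpr ⟨Finset.mem_univ _, h⟩)
      · obtain ⟨a, rfl⟩ := hall u hu
        exact Or.inr ⟨a, Finset.mem_filter.mpr ⟨Finset.mem_univ _, hu⟩,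
          joinGraph_adj_ll.mp hadj⟩
    · have : S = ({a ∈ (Finset.univ : Finset V) | Sum.inl a ∈ S}).image Sum.inl := by
        ext x
        constructor
        · intro hx
          obtain ⟨a, rfl⟩ := hall x hx
          exact Finset.mem_image_of_mem _ (Finset.mem_filter.mpr ⟨Finset.mem_univ _, hx⟩)
        · intro hx
          obtain ⟨a, ha, rfl⟩ := Finset.mem_image.mp hx
          exact (Finset.mem_filter.mp ha).2
      conv_rhs => rw [this]
      rw [Finset.card_image_of_injective _ Sum.inl_injective]
  · right
    have hall : ∀ x ∈ S, ∃ b : W, x = Sum.inr b := by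
      rintro (a | b) hx
      · exact absurd (joinGraph_adj_rl b₀ a) (hS.1 _ hs₀ _ hx)
      · exact ⟨b, rfl⟩
    refine ⟨{b ∈ (Finset.univ : Finset W) | Sum.inr b ∈ S}, ⟨?_, ?_⟩, ?_⟩
    · intro u hu v hv hadj
      exact hS.1 _ (Finset.mem_filter.mp hu).2 _ (Finset.mem_filter.mp hv).2
        (joinGraph_adj_rr.mpr hadj)
    · intro v
      rcases hS.2 (Sum.inr v) with h | ⟨u, hu, hadj⟩
      · exact Or.inl (Finset.mem_filter.mpr ⟨Finset.mem_univ _, h⟩)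
      · obtain ⟨b, rfl⟩ := hall u hu
        exact Or.inr ⟨b, Finset.mem_filter.mpr ⟨Finset.mem_univ _, hu⟩,
          joinGraph_adj_rr.mp hadj⟩
    · have : S = ({b ∈ (Finset.univ : Finset W) | Sum.inr b ∈ S}).image Sum.inr := by
        ext x
        constructor
        · intro hx
          obtain ⟨b, rfl⟩ := hall x hx
          exact Finset.mem_image_of_mem _ (Finset.mem_filter.mpr ⟨Finset.mem_univ _, hx⟩)
        · intro hx
          obtain ⟨b, hb, rfl⟩ := Finset.mem_image.mp hx
          exact (Finset.mem_filter.mp hb).2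
      conv_rhs => rw [this]
      rw [Finset.card_image_of_injective _ Sum.inr_injective]

end JoinAux

section PathCycleAux

lemma fin_sub_val_one {m : ℕ} (hm : 3 ≤ m) (u v : Fin m) :
    (u - v).val = 1 ↔ (u.val = v.val + 1 ∨ (v.val = m - 1 ∧ u.val = 0)) := by
  have hu := u.isLt; have hv := v.isLt
  rw [Fin.sub_def]
  have hmod : (m - v.val + u.val) % m =
      if m - v.val + u.val < m then m - v.val + u.val else m - v.val + u.val - m := by
    split
    · exact Nat.mod_eq_of_lt ‹_›
    · rw [Nat.mod_eq_sub_mod (le_of_not_gt ‹_›), Nat.mod_eq_of_lt (by omega)]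
  simp only [hmod]
  split <;> omega

lemma cycleGraph_adj_val {m : ℕ} (hm : 3 ≤ m) {u v : Fin m} :
    (SimpleGraph.cycleGraph m).Adj u v ↔ (u.val + 1 = v.val ∨ v.val + 1 = u.val ∨
      (u.val = 0 ∧ v.val = m - 1) ∨ (v.val = 0 ∧ u.val = m - 1)) := by
  rw [SimpleGraph.cycleGraph_adj', fin_sub_val_one hm u v, fin_sub_val_one hm v u]
  omega

/-- The standard small independent dominating set of the path/cycle on `m` vertices. -/
def pcSet (m : ℕ) (hm : 1 ≤ m) : Finset (Fin m) :=
  (Finset.univ : Finset (Fin ((m + 2) / 3))).image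
    fun j => ⟨min (3 * j.val + 1) (m - 1), by omega⟩

lemma pcSet_card {m : ℕ} (hm : 4 ≤ m) : (pcSet m (by omega)).card = (m + 2) / 3 := by
  rw [pcSet, Finset.card_image_of_injOn, Finset.card_univ, Fintype.card_fin]
  intro a _ b _ hab
  have h := congrArg Fin.val hab
  simp only at h
  have ha := a.isLt; have hb := b.isLt
  exact Fin.ext (by omega)

lemma pcSet_mem_val {m : ℕ} (hm : 4 ≤ m) {u : Fin m} (hu : u ∈ pcSet m (by omega)) :
    ∃ a : ℕ, a < (m + 2) / 3 ∧ u.val = min (3 * a + 1) (m - 1) := by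
  obtain ⟨j, _, rfl⟩ := Finset.mem_image.mp hu
  exact ⟨j.val, j.isLt, rfl⟩

lemma pcSet_indep_cycle {m : ℕ} (hm : 4 ≤ m) :
    ∀ u ∈ pcSet m (by omega), ∀ v ∈ pcSet m (by omega),
      ¬ (SimpleGraph.cycleGraph m).Adj u v := by
  intro u hu v hv hadj
  obtain ⟨a, ha, hua⟩ := pcSet_mem_val hm hu
  obtain ⟨b, hb, hvb⟩ := pcSet_mem_val hm hv
  rw [cycleGraph_adj_val (by omega)] at hadj
  omega

lemma pcSet_indep_path {m : ℕ} (hm : 4 ≤ m) :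
    ∀ u ∈ pcSet m (by omega), ∀ v ∈ pcSet m (by omega),
      ¬ (SimpleGraph.pathGraph m).Adj u v :=
  fun u hu v hv hadj =>
    pcSet_indep_cycle hm u hu v hv (SimpleGraph.pathGraph_le_cycleGraph hadj)

lemma pcSet_dom_path {m : ℕ} (hm : 4 ≤ m) :
    ∀ v : Fin m, v ∈ pcSet m (by omega) ∨
      ∃ u ∈ pcSet m (by omega), (SimpleGraph.pathGraph m).Adj u v := by
  intro v
  have hv := v.isLt
  have hjlt : v.val / 3 < (m + 2) / 3 := by omega
  set t := min (3 * (v.val / 3) + 1) (m - 1) with ht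
  let u : Fin m := ⟨t, by omega⟩
  have humem : u ∈ pcSet m (by omega) :=
    Finset.mem_image.mpr ⟨⟨v.val / 3, hjlt⟩, Finset.mem_univ _, rfl⟩
  have hcase : t = v.val ∨ t + 1 = v.val ∨ v.val + 1 = t := by omega
  rcases eq_or_ne t v.val with h | h
  · exact Or.inl (by rwa [show u = v from Fin.ext h] at humem)
  · exact Or.inr ⟨u, humem, SimpleGraph.pathGraph_adj.mpr (by simp only [u]; omega)⟩

lemma pcSet_dom_cycle {m : ℕ} (hm : 4 ≤ m) :
    ∀ v : Fin m, v ∈ pcSet m (by omega) ∨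
      ∃ u ∈ pcSet m (by omega), (SimpleGraph.cycleGraph m).Adj u v := by
  intro v
  rcases pcSet_dom_path hm v with h | ⟨u, hu, hadj⟩
  · exact Or.inl h
  · exact Or.inr ⟨u, hu, SimpleGraph.pathGraph_le_cycleGraph hadj⟩

lemma dom_lower {m : ℕ} (hm : 3 ≤ m) (G : SimpleGraph (Fin m))
    (hGadj : ∀ u v : Fin m, G.Adj u v → u.val + 1 = v.val ∨ v.val + 1 = u.val ∨
      (u.val = 0 ∧ v.val = m - 1) ∨ (v.val = 0 ∧ u.val = m - 1))
    (S : Finset (Fin m)) (hdom : ∀ v : Fin m, v ∈ S ∨ ∃ u ∈ S, G.Adj u v) :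
    (m + 2) / 3 ≤ S.card := by
  have hf : ∀ v : Fin m, ∃ u, u ∈ S ∧ (u = v ∨ G.Adj u v) := by
    intro v
    rcases hdom v with h | ⟨u, hu, ha⟩
    · exact ⟨v, h, Or.inl rfl⟩
    · exact ⟨u, hu, Or.inr ha⟩
  choose f hfS hfadj using hf
  have key : (Finset.univ : Finset (Fin m)).card ≤ 3 * S.card := by
    apply Finset.card_le_mul_card_image_of_maps_to (fun a _ => hfS a)
    intro b _
    have hsub : {a ∈ (Finset.univ : Finset (Fin m)) | f a = b} ⊆
        {b, ⟨(b.val + 1) % m, Nat.mod_lt _ (by omega)⟩,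
          ⟨(b.val + (m - 1)) % m, Nat.mod_lt _ (by omega)⟩} := by
      intro x hx
      have hfx : f x = b := (Finset.mem_filter.mp hx).2
      rcases (hfx ▸ hfadj x) with rfl | hadj
      · exact Finset.mem_insert_self _ _
      · have hb := b.isLt; have hxlt := x.isLt
        simp only [Finset.mem_insert, Finset.mem_singleton]
        rcases hGadj b x hadj with h | h | ⟨h1, h2⟩ | ⟨h1, h2⟩
        · right; left; apply Fin.ext
          show x.val = (b.val + 1) % m
          rw [Nat.mod_eq_of_lt (by omega)]; omega
        · right; right; apply Fin.ext
          show x.val = (b.val + (m - 1)) % m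
          rw [show b.val + (m - 1) = x.val + m by omega, Nat.add_mod_right,
            Nat.mod_eq_of_lt hxlt]
        · right; right; apply Fin.ext
          show x.val = (b.val + (m - 1)) % m
          rw [Nat.mod_eq_of_lt (by omega)]; omega
        · right; left; apply Fin.ext
          show x.val = (b.val + 1) % m
          rw [show b.val + 1 = m by omega, Nat.mod_self]; omega
    calc {a ∈ (Finset.univ : Finset (Fin m)) | f a = b}.card
        ≤ _ := Finset.card_le_card hsub
      _ ≤ 3 := by
        refine le_trans (Finset.card_insert_le _ _) ?_
        refine Nat.succ_le_succ (le_trans (Finset.card_insert_le _ _) ?_)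
        simp
  simp only [Finset.card_univ, Fintype.card_fin] at key
  omega

lemma path_ub {m : ℕ} (hm : 4 ≤ m) :
    ∃ A : Finset (Fin m), IndepDom (SimpleGraph.pathGraph m) A ∧ A.card = (m + 2) / 3 :=
  ⟨pcSet m (by omega), ⟨pcSet_indep_path hm, pcSet_dom_path hm⟩, pcSet_card hm⟩

lemma cycle_ub {m : ℕ} (hm : 4 ≤ m) :
    ∃ A : Finset (Fin m), IndepDom (SimpleGraph.cycleGraph m) A ∧ A.card = (m + 2) / 3 :=
  ⟨pcSet m (by omega), ⟨pcSet_indep_cycle hm, pcSet_dom_cycle hm⟩, pcSet_card hm⟩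

lemma path_lb {m : ℕ} (hm : 4 ≤ m) (A : Finset (Fin m))
    (hA : IndepDom (SimpleGraph.pathGraph m) A) : (m + 2) / 3 ≤ A.card := by
  refine dom_lower (by omega) _ ?_ A hA.2
  intro u v h
  rw [SimpleGraph.pathGraph_adj] at h
  omega

lemma cycle_lb {m : ℕ} (hm : 4 ≤ m) (A : Finset (Fin m))
    (hA : IndepDom (SimpleGraph.cycleGraph m) A) : (m + 2) / 3 ≤ A.card := by
  refine dom_lower (by omega) _ ?_ A hA.2
  intro u v h
  rw [cycleGraph_adj_val (by omega)] at h
  omega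

end PathCycleAux

lemma join_grundy {p r : ℕ} (hp : 4 ≤ p) (hr : 4 ≤ r)
    (G : SimpleGraph (Fin p)) (H : SimpleGraph (Fin r))
    (hGub : ∃ A : Finset (Fin p), IndepDom G A ∧ A.card = (p + 2) / 3)
    (hGlb : ∀ A : Finset (Fin p), IndepDom G A → (p + 2) / 3 ≤ A.card)
    (hHub : ∃ B : Finset (Fin r), IndepDom H B ∧ B.card = (r + 2) / 3)
    (hHlb : ∀ B : Finset (Fin r), IndepDom H B → (r + 2) / 3 ≤ B.card) :
    grundyPackingChromaticNumber (joinGraph G H) =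
      p + r - min ((p + 2) / 3) ((r + 2) / 3) + 1 := by
  have hpn : Nonempty (Fin p) := ⟨⟨0, by omega⟩⟩
  have hrn : Nonempty (Fin r) := ⟨⟨0, by omega⟩⟩
  have hcard : Fintype.card (Fin p ⊕ Fin r) = p + r := by simp
  have h := grundy_eq (joinGraph G H) (min ((p + 2) / 3) ((r + 2) / 3))
    join_reach_dist
    (by
      intro S hS
      rcases join_indepDom_lower S hS with ⟨A, hA, hAc⟩ | ⟨B, hB, hBc⟩
      · exact le_trans (min_le_left _ _) (hAc ▸ hGlb A hA)
      · exact le_trans (min_le_right _ _) (hBc ▸ hHlb B hB))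
    (by
      rcases le_total ((p + 2) / 3) ((r + 2) / 3) with h | h
      · obtain ⟨A, hA, hAc⟩ := hGub
        obtain ⟨hid, hc⟩ := join_indepDom_left (H := H) A hA
        exact ⟨A.image Sum.inl, hid, by rw [hc, hAc, min_eq_left h]⟩
      · obtain ⟨B, hB, hBc⟩ := hHub
        obtain ⟨hid, hc⟩ := join_indepDom_right (G := G) B hB
        exact ⟨B.image Sum.inr, hid, by rw [hc, hBc, min_eq_right h]⟩)
    (by rw [hcard]; omega)
  rw [h, hcard]

end GrundyAux

/-- For `p, r ≥ 4`,
`Γρ(P_p ∨ P_r) = Γρ(P_p ∨ C_r) = Γρ(C_p ∨ C_r) = p + r - min{⌈p/3⌉, ⌈r/3⌉} + 1`. -/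
theorem grundyPackingChromaticNumber_join_paths_cycles (p r : ℕ) (hp : 4 ≤ p)
    (hr : 4 ≤ r) :
    grundyPackingChromaticNumber
        (joinGraph (SimpleGraph.pathGraph p) (SimpleGraph.pathGraph r)) =
      p + r - min ((p + 2) / 3) ((r + 2) / 3) + 1 ∧
    grundyPackingChromaticNumber
        (joinGraph (SimpleGraph.pathGraph p) (SimpleGraph.cycleGraph r)) =
      p + r - min ((p + 2) / 3) ((r + 2) / 3) + 1 ∧
    grundyPackingChromaticNumber
        (joinGraph (SimpleGraph.cycleGraph p) (SimpleGraph.cycleGraph r)) =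
      p + r - min ((p + 2) / 3) ((r + 2) / 3) + 1 := by
  refine ⟨?_, ?_, ?_⟩
  · exact join_grundy hp hr _ _ (path_ub hp) (path_lb hp) (path_ub hr) (path_lb hr)
  · exact join_grundy hp hr _ _ (path_ub hp) (path_lb hp) (cycle_ub hr) (cycle_lb hr)
  · exact join_grundy hp hr _ _ (cycle_ub hp) (cycle_lb hp) (cycle_ub hr) (cycle_lb hr)
end

section
/- Let n ≥ 3 and let G = K_{n,n} − M be the graph obtained from the complete bipartite graph with parts {u_1,…,u_n} and {v_1,…,v_n} by deleting the perfect matching M = {u_i v_i : 1 ≤ i ≤ n}. Then Γρ(G) = 2n − 2. -/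
open SimpleGraph

open Sum SimpleGraph

section CBMAux

variable {n : ℕ}

private lemma cbm_adj_lr {i j : Fin n} (h : i ≠ j) :
    (completeBipartiteMinusMatching n).Adj (Sum.inl i) (Sum.inr j) := h

private lemma cbm_adj_rl {i j : Fin n} (h : i ≠ j) :
    (completeBipartiteMinusMatching n).Adj (Sum.inr i) (Sum.inl j) := h

private lemma cbm_adj_cases {p q : Fin n ⊕ Fin n}
    (h : (completeBipartiteMinusMatching n).Adj p q) :
    (∃ i j, i ≠ j ∧ p = Sum.inl i ∧ q = Sum.inr j) ∨
    (∃ i j, i ≠ j ∧ p = Sum.inr i ∧ q = Sum.inl j) := by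
  rcases p with i | i <;> rcases q with j | j
  · exact absurd h (fun h => h)
  · exact Or.inl ⟨i, j, h, rfl, rfl⟩
  · exact Or.inr ⟨i, j, h, rfl, rfl⟩
  · exact absurd h (fun h => h)

private lemma cbm_third (hn : 3 ≤ n) (i j : Fin n) : ∃ k : Fin n, k ≠ i ∧ k ≠ j := by
  by_contra h
  push_neg at h
  have hsub : (Finset.univ : Finset (Fin n)) ⊆ {i, j} := by
    intro k _
    by_cases hk : k = i
    · simp [hk]
    · simp [h k hk]
  have := Finset.card_le_card hsub
  have h2 : ({i, j} : Finset (Fin n)).card ≤ 2 := Finset.card_insert_le _ _ |>.trans (by simp)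
  simp [Finset.card_univ] at this
  omega

/-- any two vertices reachable with distance at most 3 -/
private lemma cbm_reach_diam (hn : 3 ≤ n) (u v : Fin n ⊕ Fin n) :
    (completeBipartiteMinusMatching n).Reachable u v ∧
      (completeBipartiteMinusMatching n).dist u v ≤ 3 := by
  by_cases huv : u = v
  · subst huv; exact ⟨Reachable.refl u, by simp [SimpleGraph.dist_self]⟩
  rcases u with i | i <;> rcases v with j | j
  · -- inl i, inl j, i ≠ j
    have hij : i ≠ j := fun h => huv (by rw [h])
    obtain ⟨k, hk1, hk2⟩ := cbm_third hn i j
    let w : (completeBipartiteMinusMatching n).Walk (Sum.inl i) (Sum.inl j) :=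
      Walk.cons (cbm_adj_lr (Ne.symm hk1)) (Walk.cons (cbm_adj_rl hk2) Walk.nil)
    exact ⟨w.reachable, (dist_le w).trans (by unfold w; simp)⟩
  · by_cases hij : i = j
    · subst hij
      obtain ⟨a, ha, -⟩ := cbm_third hn i i
      obtain ⟨b, hb1, hb2⟩ := cbm_third hn a i
      let w : (completeBipartiteMinusMatching n).Walk (Sum.inl i) (Sum.inr i) :=
        Walk.cons (cbm_adj_lr (Ne.symm ha)) (Walk.cons (cbm_adj_rl (Ne.symm hb1))
          (Walk.cons (cbm_adj_lr hb2) Walk.nil))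
      exact ⟨w.reachable, (dist_le w).trans (by unfold w; simp)⟩
    · let w : (completeBipartiteMinusMatching n).Walk (Sum.inl i) (Sum.inr j) :=
        Walk.cons (cbm_adj_lr hij) Walk.nil
      exact ⟨w.reachable, (dist_le w).trans (by unfold w; simp)⟩
  · by_cases hij : i = j
    · subst hij
      obtain ⟨a, ha, -⟩ := cbm_third hn i i
      obtain ⟨b, hb1, hb2⟩ := cbm_third hn a i
      let w : (completeBipartiteMinusMatching n).Walk (Sum.inr i) (Sum.inl i) :=
        Walk.cons (cbm_adj_rl (Ne.symm ha)) (Walk.cons (cbm_adj_lr (Ne.symm hb1))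
          (Walk.cons (cbm_adj_rl hb2) Walk.nil))
      exact ⟨w.reachable, (dist_le w).trans (by unfold w; simp)⟩
    · let w : (completeBipartiteMinusMatching n).Walk (Sum.inr i) (Sum.inl j) :=
        Walk.cons (cbm_adj_rl hij) Walk.nil
      exact ⟨w.reachable, (dist_le w).trans (by unfold w; simp)⟩
  · have hij : i ≠ j := fun h => huv (by rw [h])
    obtain ⟨k, hk1, hk2⟩ := cbm_third hn i j
    let w : (completeBipartiteMinusMatching n).Walk (Sum.inr i) (Sum.inr j) :=
      Walk.cons (cbm_adj_rl (Ne.symm hk1)) (Walk.cons (cbm_adj_lr hk2) Walk.nil)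
    exact ⟨w.reachable, (dist_le w).trans (by unfold w; simp)⟩

private lemma dist_le_two_cases {V : Type*} {G : SimpleGraph V} {u v : V}
    (h : G.Reachable u v) (hd : G.dist u v ≤ 2) :
    u = v ∨ G.Adj u v ∨ ∃ w, G.Adj u w ∧ G.Adj w v := by
  obtain ⟨p, hp⟩ := h.exists_walk_length_eq_dist
  have hl : p.length ≤ 2 := by omega
  cases p with
  | nil => exact Or.inl rfl
  | cons hadj q =>
    cases q with
    | nil => exact Or.inr (Or.inl hadj)
    | cons hadj2 q2 =>
      have h0 : q2.length = 0 := by simp only [Walk.length_cons] at hl; omega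
      have := Walk.eq_of_length_eq_zero h0
      subst this
      exact Or.inr (Or.inr ⟨_, hadj, hadj2⟩)

end CBMAux

private lemma cbm_dist_pair (hn : 3 ≤ n) (i : Fin n) :
    ¬ (completeBipartiteMinusMatching n).dist (Sum.inl i) (Sum.inr i) ≤ 2 := by
  intro hd
  rcases dist_le_two_cases (cbm_reach_diam hn _ _).1 hd with h | h | ⟨w, h1, h2⟩
  · exact absurd h (by simp)
  · rcases cbm_adj_cases h with ⟨a, b, hab, ha, hb⟩ | ⟨a, b, hab, ha, hb⟩
    · cases ha; cases hb; exact hab rfl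
    · exact absurd ha (by simp)
  · rcases cbm_adj_cases h1 with ⟨a, b, hab, ha, hb⟩ | ⟨a, b, hab, ha, hb⟩
    · cases hb
      rcases cbm_adj_cases h2 with ⟨a', b', hab', ha', hb'⟩ | ⟨a', b', hab', ha', hb'⟩
      · exact absurd ha' (by simp)
      · exact absurd hb' (by simp)
    · exact absurd ha (by simp)

private lemma cbm_dist_pair' (hn : 3 ≤ n) (i : Fin n) :
    ¬ (completeBipartiteMinusMatching n).dist (Sum.inr i) (Sum.inl i) ≤ 2 := by
  rw [SimpleGraph.dist_comm]; exact cbm_dist_pair hn i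

/-- The coloring realizing `2n-2`. -/
private def cbmColor (n : ℕ) : Fin n ⊕ Fin n → ℕ :=
  Sum.elim (fun i => if (i : ℕ) = 0 then 1 else if (i : ℕ) = 1 then 2 else (i : ℕ) + 1)
    (fun i => if (i : ℕ) = 0 then 1 else if (i : ℕ) = 1 then 2 else (i : ℕ) + n - 1)

private lemma cbmColor_inl_inj (hn : 3 ≤ n) {i j : Fin n}
    (h : cbmColor n (Sum.inl i) = cbmColor n (Sum.inl j)) : i = j := by
  have hi := i.isLt; have hj := j.isLt
  simp only [cbmColor, Sum.elim_inl] at h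
  refine Fin.ext ?_
  split_ifs at h <;> omega

private lemma cbmColor_inr_inj (hn : 3 ≤ n) {i j : Fin n}
    (h : cbmColor n (Sum.inr i) = cbmColor n (Sum.inr j)) : i = j := by
  have hi := i.isLt; have hj := j.isLt
  simp only [cbmColor, Sum.elim_inr] at h
  refine Fin.ext ?_
  split_ifs at h <;> omega

private lemma cbmColor_lr (hn : 3 ≤ n) {i j : Fin n}
    (h : cbmColor n (Sum.inl i) = cbmColor n (Sum.inr j)) :
    i = j ∧ cbmColor n (Sum.inl i) ≤ 2 := by
  have hi := i.isLt; have hj := j.isLt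
  simp only [cbmColor, Sum.elim_inl, Sum.elim_inr] at h ⊢
  constructor
  · refine Fin.ext ?_
    split_ifs at h <;> omega
  · split_ifs at h ⊢ <;> omega

private lemma cbm_lower (hn : 3 ≤ n) :
    IsGreedyPackingColoring (completeBipartiteMinusMatching n) (2 * n - 2) (cbmColor n) := by
  refine ⟨⟨?_, ?_⟩, ⟨Sum.inr ⟨n - 1, by omega⟩, ?_⟩, ?_⟩
  · -- bounds
    rintro (i | i) <;>
      · have hi := i.isLt
        simp only [cbmColor, Sum.elim_inl, Sum.elim_inr]
        split_ifs <;> first | exact ‹False›.elim | omega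
  · -- packing
    rintro (i | i) (j | j) hne hcc hre
    · exact absurd (congrArg Sum.inl (cbmColor_inl_inj hn hcc)) hne
    · obtain ⟨heq, hle⟩ := cbmColor_lr hn hcc
      subst heq
      have := cbm_dist_pair hn i
      omega
    · obtain ⟨heq, hle⟩ := cbmColor_lr hn hcc.symm
      subst heq
      have := cbm_dist_pair' hn j
      omega
    · exact absurd (congrArg Sum.inr (cbmColor_inr_inj hn hcc)) hne
  · -- uses top color
    simp only [cbmColor, Sum.elim_inr]
    split_ifs <;> first | exact ‹False›.elim | omega
  · -- greedy
    intro v j hj1 hjlt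
    have hvb : cbmColor n v ≤ 2 * n - 2 := by
      rcases v with i | i <;>
        · have hi := i.isLt
          simp only [cbmColor, Sum.elim_inl, Sum.elim_inr]
          split_ifs <;> first | exact ‹False›.elim | omega
    rcases eq_or_lt_of_le hj1 with rfl | hj2
    · -- j = 1
      rcases v with i | i
      · have hi0 : (i : ℕ) ≠ 0 := by
          intro h0
          simp only [cbmColor, Sum.elim_inl, h0, if_pos] at hjlt
          omega
        refine ⟨Sum.inr ⟨0, by omega⟩, by simp [cbmColor], ?_, ?_⟩
        · exact (cbm_adj_rl (by simp [Fin.ext_iff]; omega)).reachable.symm.symm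
        · rw [SimpleGraph.dist_comm]
          exact (dist_le (Walk.cons (cbm_adj_lr (by simp [Fin.ext_iff]; omega)) Walk.nil)).trans (by simp)
      · have hi0 : (i : ℕ) ≠ 0 := by
          intro h0
          simp only [cbmColor, Sum.elim_inr, h0, if_pos] at hjlt
          omega
        refine ⟨Sum.inl ⟨0, by omega⟩, by simp [cbmColor], ?_, ?_⟩
        · exact (cbm_adj_lr (by simp [Fin.ext_iff]; omega)).reachable
        · exact (dist_le (Walk.cons (cbm_adj_lr (by simp [Fin.ext_iff]; omega)) Walk.nil)).trans (by simp)
    rcases eq_or_lt_of_le (show 2 ≤ j from hj2) with rfl | hj3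
    · -- j = 2
      rcases v with i | i
      · have hi0 : (i : ℕ) ≠ 0 ∧ (i : ℕ) ≠ 1 := by
          constructor <;>
            · intro h0
              simp only [cbmColor, Sum.elim_inl, h0] at hjlt
              split_ifs at hjlt <;> omega
        refine ⟨Sum.inr ⟨1, by omega⟩, by simp [cbmColor], ?_, ?_⟩
        · exact (cbm_adj_lr (by simp [Fin.ext_iff]; omega)).reachable.symm
        · rw [SimpleGraph.dist_comm]
          exact (dist_le (Walk.cons (cbm_adj_lr (by simp [Fin.ext_iff]; omega)) Walk.nil)).trans (by simp)
      · have hi0 : (i : ℕ) ≠ 0 ∧ (i : ℕ) ≠ 1 := by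
          constructor <;>
            · intro h0
              simp only [cbmColor, Sum.elim_inr, h0] at hjlt
              split_ifs at hjlt <;> omega
        refine ⟨Sum.inl ⟨1, by omega⟩, by simp [cbmColor], ?_, ?_⟩
        · exact (cbm_adj_lr (by simp [Fin.ext_iff]; omega)).reachable
        · exact (dist_le (Walk.cons (cbm_adj_lr (by simp [Fin.ext_iff]; omega)) Walk.nil)).trans (by simp)
    · -- 3 ≤ j
      have hjk : j ≤ 2 * n - 3 := by omega
      by_cases hjn : j ≤ n
      · have hlt1 : j - 1 < n := by omega
        refine ⟨Sum.inl ⟨j - 1, hlt1⟩, ?_, (cbm_reach_diam hn _ _).1, ?_⟩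
        · show (if j - 1 = 0 then 1 else if j - 1 = 1 then 2 else (j - 1) + 1) = j
          split_ifs <;> first | exact ‹False›.elim | omega
        · exact le_trans (cbm_reach_diam hn _ _).2 (by omega)
      · obtain ⟨m, rfl⟩ : ∃ m, j = n + m + 1 := ⟨j - n - 1, by omega⟩
        have hlt : m + 2 < n := by omega
        refine ⟨Sum.inr ⟨m + 2, hlt⟩, ?_, (cbm_reach_diam hn _ _).1, ?_⟩
        · show (if m + 2 = 0 then 1 else if m + 2 = 1 then 2 else (m + 2) + n - 1) = n + m + 1
          split_ifs <;> first | exact ‹False›.elim | omega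
        · exact le_trans (cbm_reach_diam hn _ _).2 (by omega)

private def cbmPartner : Fin n ⊕ Fin n → Fin n ⊕ Fin n := Sum.elim Sum.inr Sum.inl

private lemma cbm_partner_ne (x : Fin n ⊕ Fin n) : x ≠ cbmPartner x := by
  rcases x with i | i <;> simp [cbmPartner]

private lemma cbm_dist_partner (hn : 3 ≤ n) (x : Fin n ⊕ Fin n) :
    ¬ (completeBipartiteMinusMatching n).dist x (cbmPartner x) ≤ 2 := by
  rcases x with i | i
  · exact cbm_dist_pair hn i
  · exact cbm_dist_pair' hn i

private lemma cbm_not_adj_partner (x : Fin n ⊕ Fin n) :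
    ¬ (completeBipartiteMinusMatching n).Adj (cbmPartner x) x := by
  intro h
  rcases x with i | i <;>
    rcases cbm_adj_cases h with ⟨a, b, hab, h1, h2⟩ | ⟨a, b, hab, h1, h2⟩ <;>
      simp_all [cbmPartner]

private lemma cbm_upper (hn : 3 ≤ n) {k : ℕ} {c : Fin n ⊕ Fin n → ℕ}
    (h : IsGreedyPackingColoring (completeBipartiteMinusMatching n) k c) : k ≤ 2 * n - 2 := by
  obtain ⟨⟨hb, hp⟩, ⟨vk, hvk⟩, hg⟩ := h
  by_contra hk
  push_neg at hk
  have hk5 : 5 ≤ k := by omega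
  -- every color in [1,k] is used
  have hex : ∀ j, 1 ≤ j → j ≤ k → ∃ u, c u = j := by
    intro j h1 h2
    rcases eq_or_lt_of_le h2 with rfl | hlt
    · exact ⟨vk, hvk⟩
    · obtain ⟨u, hu, -, -⟩ := hg vk j h1 (by omega)
      exact ⟨u, hu⟩
  -- distance ≤ 1 between distinct vertices gives adjacency
  have hadj1 : ∀ u v : Fin n ⊕ Fin n, u ≠ v →
      (completeBipartiteMinusMatching n).dist u v ≤ 1 →
      (completeBipartiteMinusMatching n).Adj u v := by
    intro u v hne hd
    have hre := (cbm_reach_diam hn u v).1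
    have hpos := hre.pos_dist_of_ne hne
    exact SimpleGraph.dist_eq_one_iff_adj.mp (by omega)
  classical
  set S : ℕ → Finset (Fin n ⊕ Fin n) :=
    fun j => Finset.univ.filter (fun v => c v = j) with hSdef
  have hmemS : ∀ u j, u ∈ S j ↔ c u = j := by
    intro u j; simp [hSdef]
  have hcard1 : ∀ j, 3 ≤ j → j ≤ k → (S j).card = 1 := by
    intro j h3 hk'
    have hle : (S j).card ≤ 1 := by
      rw [Finset.card_le_one]
      intro a ha b hb'
      by_contra hab
      have hca : c a = j := (hmemS a j).mp ha
      have hcb : c b = j := (hmemS b j).mp hb'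
      have h1 := hp a b hab (by rw [hca, hcb]) (cbm_reach_diam hn a b).1
      have h2 := (cbm_reach_diam hn a b).2
      omega
    obtain ⟨u, hu⟩ := hex j (by omega) hk'
    have hmem : u ∈ S j := (hmemS u j).mpr hu
    have := Finset.card_pos.mpr ⟨u, hmem⟩
    omega
  -- S 1 has at least two elements
  obtain ⟨x, hx⟩ := hex 1 le_rfl (by omega)
  have h2S1 : 2 ≤ (S 1).card := by
    by_cases hy : c (cbmPartner x) = 1
    · exact Finset.one_lt_card.mpr
        ⟨x, (hmemS x 1).mpr hx, cbmPartner x, (hmemS _ 1).mpr hy, cbm_partner_ne x⟩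
    · have hy2 : 1 < c (cbmPartner x) :=
        lt_of_le_of_ne (hb (cbmPartner x)).1 (Ne.symm hy)
      obtain ⟨u, hu1, hur, hud⟩ := hg (cbmPartner x) 1 le_rfl hy2
      have hux : u ≠ x := by
        rintro rfl
        exact cbm_dist_partner hn u (by omega)
      refine Finset.one_lt_card.mpr ⟨x, (hmemS x 1).mpr hx, u, (hmemS u 1).mpr hu1, Ne.symm hux⟩
  -- S 2 is nonempty
  obtain ⟨z2, hz2⟩ := hex 2 (by omega) (by omega)
  have h1S2 : 1 ≤ (S 2).card := Finset.card_pos.mpr ⟨z2, (hmemS z2 2).mpr hz2⟩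
  -- counting
  have hcount : Fintype.card (Fin n ⊕ Fin n) = ∑ j ∈ Finset.Icc 1 k, (S j).card := by
    classical
    exact Finset.card_eq_sum_card_fiberwise
      (fun v _ => Finset.mem_Icc.mpr ⟨(hb v).1, (hb v).2⟩)
  have hcardV : Fintype.card (Fin n ⊕ Fin n) = 2 * n := by
    simp [Fintype.card_sum]; omega
  have hsplit : Finset.Icc 1 k = insert 1 (insert 2 (Finset.Icc 3 k)) := by
    ext m
    simp only [Finset.mem_Icc, Finset.mem_insert]
    omega
  have hsum3 : ∑ j ∈ Finset.Icc 3 k, (S j).card = k - 2 := by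
    rw [Finset.sum_congr rfl
      (fun j hj => hcard1 j (Finset.mem_Icc.mp hj).1 (Finset.mem_Icc.mp hj).2)]
    simp [Nat.card_Icc]
  have h1not : (1 : ℕ) ∉ insert 2 (Finset.Icc 3 k) := by
    simp only [Finset.mem_insert, Finset.mem_Icc]
    omega
  have h2not : (2 : ℕ) ∉ Finset.Icc 3 k := by
    simp only [Finset.mem_Icc]
    omega
  have htotal : 2 * n = (S 1).card + ((S 2).card + (k - 2)) := by
    rw [← hcardV, hcount, hsplit, Finset.sum_insert h1not, Finset.sum_insert h2not, hsum3]
  have hS1card : (S 1).card = 2 := by omega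
  have hS2card : (S 2).card = 1 := by omega
  -- the unique color-2 vertex
  obtain ⟨z, hz⟩ := Finset.card_eq_one.mp hS2card
  have hcz : c z = 2 := by
    have : z ∈ S 2 := hz ▸ Finset.mem_singleton_self z
    exact (hmemS z 2).mp this
  have hzuniq : ∀ u, c u = 2 → u = z := by
    intro u hu
    have : u ∈ S 2 := (hmemS u 2).mpr hu
    rw [hz] at this
    exact Finset.mem_singleton.mp this
  -- the partner of z has color 1
  have hcw : c (cbmPartner z) = 1 := by
    rcases lt_trichotomy (c (cbmPartner z)) 2 with hlt | heq | hgt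
    · have := (hb (cbmPartner z)).1; omega
    · exact absurd (hzuniq _ heq).symm (cbm_partner_ne z)
    · obtain ⟨u, hu2, -, hud⟩ := hg (cbmPartner z) 2 (by omega) hgt
      rw [hzuniq u hu2] at hud
      exact absurd hud (cbm_dist_partner hn z)
  -- a color-1 neighbor of z
  obtain ⟨t, ht1, htr, htd⟩ := hg z 1 le_rfl (by omega)
  have htz : t ≠ z := by intro h; rw [h, hcz] at ht1; omega
  have htadj : (completeBipartiteMinusMatching n).Adj t z := hadj1 t z htz htd
  have htw : t ≠ cbmPartner z := by
    intro h
    rw [h] at htadj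
    exact cbm_not_adj_partner z htadj
  -- S 1 = {partner z, t}
  have hwt : cbmPartner z ≠ t := Ne.symm htw
  have hsub : ({cbmPartner z, t} : Finset (Fin n ⊕ Fin n)) ⊆ S 1 := by
    intro a ha
    rcases Finset.mem_insert.mp ha with rfl | ha'
    · exact (hmemS _ 1).mpr hcw
    · rw [Finset.mem_singleton.mp ha']
      exact (hmemS _ 1).mpr ht1
  have hSeq : ({cbmPartner z, t} : Finset (Fin n ⊕ Fin n)) = S 1 :=
    Finset.eq_of_subset_of_card_le hsub
      (by rw [hS1card, Finset.card_insert_of_notMem (by simp [hwt]), Finset.card_singleton])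
  have hc1mem : ∀ u, c u = 1 → u = cbmPartner z ∨ u = t := by
    intro u hu
    have : u ∈ S 1 := (hmemS u 1).mpr hu
    rw [← hSeq] at this
    simpa using this
  -- final contradiction, by cases on the side of z
  rcases z with a | a
  · -- z = inl a, partner = inr a, t = inr b
    obtain ⟨b, hba, htb⟩ : ∃ b : Fin n, b ≠ a ∧ t = Sum.inr b := by
      rcases cbm_adj_cases htadj with ⟨a', b', hab', h1', h2'⟩ | ⟨a', b', hab', h1', h2'⟩
      · exact absurd h2' (by simp)
      · rcases Sum.inl.inj h2' with rfl
        exact ⟨a', hab', h1'⟩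
    obtain ⟨cc, hcc1, hcc2⟩ := cbm_third hn a b
    have hccc : c (Sum.inr cc) ≠ 1 := by
      intro h1
      rcases hc1mem _ h1 with h' | h'
      · exact hcc1 (Sum.inr.inj h')
      · rw [htb] at h'
        exact hcc2 (Sum.inr.inj h')
    have hccgt : 1 < c (Sum.inr cc) := lt_of_le_of_ne (hb _).1 (Ne.symm hccc)
    obtain ⟨s, hs1, -, hsd⟩ := hg (Sum.inr cc) 1 le_rfl hccgt
    have hsne : s ≠ Sum.inr cc := by intro h; rw [h] at hs1; exact hccc hs1
    have hsadj := hadj1 s (Sum.inr cc) hsne hsd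
    rcases hc1mem s hs1 with rfl | rfl
    · rcases cbm_adj_cases hsadj with ⟨a', b', hab', h1', h2'⟩ | ⟨a', b', hab', h1', h2'⟩
      · exact absurd h1' (by simp [cbmPartner])
      · exact absurd h2' (by simp)
    · rw [htb] at hsadj
      rcases cbm_adj_cases hsadj with ⟨a', b', hab', h1', h2'⟩ | ⟨a', b', hab', h1', h2'⟩
      · exact absurd h1' (by simp)
      · exact absurd h2' (by simp)
  · -- z = inr a, partner = inl a, t = inl b
    obtain ⟨b, hba, htb⟩ : ∃ b : Fin n, b ≠ a ∧ t = Sum.inl b := by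
      rcases cbm_adj_cases htadj with ⟨a', b', hab', h1', h2'⟩ | ⟨a', b', hab', h1', h2'⟩
      · rcases Sum.inr.inj h2' with rfl
        exact ⟨a', hab', h1'⟩
      · exact absurd h2' (by simp)
    obtain ⟨cc, hcc1, hcc2⟩ := cbm_third hn a b
    have hccc : c (Sum.inl cc) ≠ 1 := by
      intro h1
      rcases hc1mem _ h1 with h' | h'
      · exact hcc1 (Sum.inl.inj h')
      · rw [htb] at h'
        exact hcc2 (Sum.inl.inj h')
    have hccgt : 1 < c (Sum.inl cc) := lt_of_le_of_ne (hb _).1 (Ne.symm hccc)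
    obtain ⟨s, hs1, -, hsd⟩ := hg (Sum.inl cc) 1 le_rfl hccgt
    have hsne : s ≠ Sum.inl cc := by intro h; rw [h] at hs1; exact hccc hs1
    have hsadj := hadj1 s (Sum.inl cc) hsne hsd
    rcases hc1mem s hs1 with rfl | rfl
    · rcases cbm_adj_cases hsadj with ⟨a', b', hab', h1', h2'⟩ | ⟨a', b', hab', h1', h2'⟩
      · exact absurd h2' (by simp)
      · exact absurd h1' (by simp [cbmPartner])
    · rw [htb] at hsadj
      rcases cbm_adj_cases hsadj with ⟨a', b', hab', h1', h2'⟩ | ⟨a', b', hab', h1', h2'⟩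
      · exact absurd h2' (by simp)
      · exact absurd h1' (by simp)


/-- For `n ≥ 3`, the graph `K_{n,n}` minus a perfect matching satisfies
`Γρ(K_{n,n} - M) = 2n - 2`. -/
theorem grundyPackingChromaticNumber_completeBipartiteMinusMatching (n : ℕ) (hn : 3 ≤ n) :
    grundyPackingChromaticNumber (completeBipartiteMinusMatching n) = 2 * n - 2 := by
  have hmem : (2 * n - 2) ∈
      {k | ∃ c, IsGreedyPackingColoring (completeBipartiteMinusMatching n) k c} :=
    ⟨cbmColor n, cbm_lower hn⟩
  have hub : ∀ k ∈ {k | ∃ c, IsGreedyPackingColoring (completeBipartiteMinusMatching n) k c},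
      k ≤ 2 * n - 2 := by
    rintro k ⟨c, hc⟩
    exact cbm_upper hn hc
  exact le_antisymm (csSup_le ⟨_, hmem⟩ hub) (le_csSup ⟨2 * n - 2, hub⟩ hmem)
end

section
/- Let G be a connected graph on n vertices with diam(G) = 3. If there exists a maximal independent set A of G with |A| = i(G) such that the graph D(G) − A, obtained from the diametrical graph D(G) by deleting the vertices of A, has an isolated vertex, then Γρ(G) = n − i(G) + 1. -/
open SimpleGraph

private lemma dist_le_graphDiam {V : Type*} [Fintype V] (G : SimpleGraph V) (u w : V) :
    G.dist u w ≤ graphDiam G :=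
  le_trans (Finset.le_sup (f := fun x => G.dist u x) (Finset.mem_univ w))
    (Finset.le_sup (f := _root_.eccent G) (Finset.mem_univ u))

private lemma maxIndep_dominates {V : Type*} {G : SimpleGraph V} {A : Finset V}
    (hA : IsMaxIndepFinset G A) {w : V} (hw : w ∉ A) : ∃ u ∈ A, G.Adj u w := by
  classical
  by_contra hc
  push_neg at hc
  have hind : IsIndepFinset G (insert w A) := by
    intro x hx y hy hadj
    rcases Finset.mem_insert.mp hx with hxw | hx
    · rcases Finset.mem_insert.mp hy with hyw | hy
      · exact G.irrefl (hxw ▸ hyw ▸ hadj)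
      · exact hc y hy (hxw ▸ hadj).symm
    · rcases Finset.mem_insert.mp hy with hyw | hy
      · exact hc x hx (hyw ▸ hadj)
      · exact hA.1 x hx y hy hadj
  have heq := hA.2 _ hind (Finset.subset_insert w A)
  exact hw (heq ▸ Finset.mem_insert_self w A)

private lemma grundy_ub {V : Type*} [Fintype V] {G : SimpleGraph V}
    {k : ℕ} {c : V → ℕ} (hc : IsGreedyPackingColoring G k c) :
    k ≤ Fintype.card V - indepDomNum G + 1 := by
  classical
  obtain ⟨⟨hbound, hpack⟩, ⟨v0, hv0⟩, hgreedy⟩ := hc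
  have hk1 : 1 ≤ k := le_trans (hbound v0).1 ((hbound v0).2)
  set C1 : Finset V := Finset.univ.filter (fun v => c v = 1) with hC1
  have hmemC1 : ∀ v, v ∈ C1 ↔ c v = 1 := by intro v; simp [hC1]
  have hC1max : IsMaxIndepFinset G C1 := by
    constructor
    · intro x hx y hy hadj
      have hxy : x ≠ y := G.ne_of_adj hadj
      have h1 := hpack x y hxy (((hmemC1 x).mp hx).trans ((hmemC1 y).mp hy).symm)
        hadj.reachable
      rw [(hmemC1 x).mp hx] at h1
      have h2 : G.dist x y = 1 := SimpleGraph.dist_eq_one_iff_adj.mpr hadj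
      omega
    · intro t ht hsub
      apply Finset.Subset.antisymm hsub
      intro w hw
      by_contra hwC
      have hcw : 2 ≤ c w := by
        have h1 := (hbound w).1
        have hne : c w ≠ 1 := fun hh => hwC ((hmemC1 w).mpr hh)
        omega
      obtain ⟨u, hu1, hur, hud⟩ := hgreedy w 1 le_rfl (by omega)
      have hune : u ≠ w := by rintro rfl; omega
      have hdpos : 0 < G.dist u w := hur.pos_dist_of_ne hune
      have hadj : G.Adj u w := SimpleGraph.dist_eq_one_iff_adj.mp (le_antisymm hud hdpos)
      exact ht u (hsub ((hmemC1 u).mpr hu1)) w hw hadj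
  have hrep : ∀ j ∈ Finset.Icc 2 k, ∃ u, c u = j := by
    intro j hj
    rw [Finset.mem_Icc] at hj
    rcases eq_or_lt_of_le hj.2 with rfl | hlt
    · exact ⟨v0, hv0⟩
    · rw [← hv0] at hlt
      obtain ⟨u, hu, _, _⟩ := hgreedy v0 j (by omega) hlt
      exact ⟨u, hu⟩
  have hne : Nonempty V := ⟨v0⟩
  choose! r hr using hrep
  set R := (Finset.Icc 2 k).image r with hR
  have hcardR : R.card = k - 1 := by
    rw [hR, Finset.card_image_of_injOn]
    · rw [Nat.card_Icc]; omega
    · intro a ha b hb hab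
      rw [← hr a ha, ← hr b hb, hab]
  have hdisj : Disjoint C1 R := by
    rw [Finset.disjoint_left]
    intro x hx hxR
    obtain ⟨j, hj, rfl⟩ := Finset.mem_image.mp hxR
    have h1 := hr j hj
    have h2 := (hmemC1 _).mp hx
    rw [Finset.mem_Icc] at hj
    omega
  have hcard : C1.card + (k - 1) ≤ Fintype.card V := by
    rw [← hcardR, ← Finset.card_union_of_disjoint hdisj]
    exact Finset.card_le_univ _
  have hi : indepDomNum G ≤ C1.card := Nat.sInf_le ⟨C1, hC1max, rfl⟩
  omega

private lemma grundy_lb {V : Type*} [Fintype V] {G : SimpleGraph V} (hG : G.Connected)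
    (hd : graphDiam G = 3) {A : Finset V} (hA : IsMaxIndepFinset G A) {v : V}
    (hvA : v ∉ A) (hv : ∀ u : V, u ∉ A → ¬ (diamGraph G).Adj v u) :
    ∃ c : V → ℕ, IsGreedyPackingColoring G (Fintype.card V - A.card + 1) c := by
  classical
  set n := Fintype.card V with hn
  set i := A.card with hi
  set B : Finset V := Finset.univ \ insert v A with hB
  have hmemB : ∀ w, w ∈ B ↔ (w ∉ A ∧ w ≠ v) := by
    intro w
    simp only [hB, Finset.mem_sdiff, Finset.mem_univ, true_and, Finset.mem_insert]
    tauto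
  set m := B.card with hm
  have hcardins : (insert v A).card = i + 1 := Finset.card_insert_of_notMem hvA
  have hins : i + 1 ≤ n := by
    rw [← hcardins, hn, ← Finset.card_univ]
    exact Finset.card_le_univ _
  have hmeq : m = n - (i + 1) := by
    rw [hm, hB, Finset.card_sdiff_of_subset (Finset.subset_univ _), Finset.card_univ, hcardins]
  have hkeq : n - i + 1 = m + 2 := by omega
  set e := B.equivFin with he
  set c : V → ℕ := fun w =>
    if w ∈ A then 1 else if w = v then 2
    else if hw : w ∈ B then (e ⟨w, hw⟩ : ℕ) + 3 else 0 with hc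
  have hcA : ∀ a ∈ A, c a = 1 := by intro a ha; simp [hc, ha]
  have hcv : c v = 2 := by simp [hc, hvA]
  have hcB : ∀ (x : {y // y ∈ B}), c x.1 = (e x : ℕ) + 3 := by
    intro x
    have hx := (hmemB x.1).mp x.2
    simp only [hc, if_neg hx.1, if_neg hx.2, dif_pos x.2]
  have hval : ∀ w, (c w = 1 ∧ w ∈ A) ∨ (c w = 2 ∧ w = v) ∨
      (∃ hw : w ∈ B, c w = (e ⟨w, hw⟩ : ℕ) + 3) := by
    intro w
    by_cases hwA : w ∈ A
    · exact Or.inl ⟨hcA w hwA, hwA⟩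
    by_cases hwv : w = v
    · exact Or.inr (Or.inl ⟨hwv ▸ hcv, hwv⟩)
    have hwB : w ∈ B := (hmemB w).mpr ⟨hwA, hwv⟩
    exact Or.inr (Or.inr ⟨hwB, hcB ⟨w, hwB⟩⟩)
  have hbnd : ∀ w, 1 ≤ c w ∧ c w ≤ n - i + 1 := by
    intro w
    rw [hkeq]
    rcases hval w with ⟨h1, _⟩ | ⟨h1, _⟩ | ⟨hw, h1⟩
    · omega
    · omega
    · have := (e ⟨w, hw⟩).2
      omega
  have hdist3 : ∀ u w : V, G.dist u w ≤ 3 := by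
    intro u w; rw [← hd]; exact dist_le_graphDiam G u w
  refine ⟨c, ⟨hbnd, ?_⟩, ?_, ?_⟩
  · -- packing property
    intro u w hne hcuw hreach
    rcases hval u with ⟨h1, hu⟩ | ⟨h1, hu⟩ | ⟨hu, h1⟩ <;>
      rcases hval w with ⟨h2, hw⟩ | ⟨h2, hw⟩ | ⟨hw, h2⟩
    · -- both in A
      have hpos : 0 < G.dist u w := hreach.pos_dist_of_ne hne
      have hne1 : G.dist u w ≠ 1 := fun hh =>
        hA.1 u hu w hw (SimpleGraph.dist_eq_one_iff_adj.mp hh)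
      omega
    · omega
    · omega
    · omega
    · exact absurd (hu.trans hw.symm) hne
    · omega
    · omega
    · omega
    · -- both in B
      exfalso
      have hef : e ⟨u, hu⟩ = e ⟨w, hw⟩ := by
        apply Fin.ext
        omega
      have := e.injective hef
      exact hne (congrArg Subtype.val this)
  · -- color k used
    rw [hkeq]
    rcases Nat.eq_zero_or_pos m with hm0 | hmpos
    · exact ⟨v, by rw [hcv, hm0]⟩
    · refine ⟨(e.symm ⟨m - 1, by omega⟩).1, ?_⟩
      rw [hcB (e.symm ⟨m - 1, by omega⟩)]
      rw [Equiv.apply_symm_apply]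
      simp only []
      omega
  · -- greedy property
    intro w j hj1 hjlt
    have hcwle := (hbnd w).2
    rw [hkeq] at hcwle
    rcases Nat.lt_or_ge j 2 with hj | hj
    · -- j = 1
      have hj1' : j = 1 := by omega
      subst hj1'
      have hwA : w ∉ A := by
        intro hwA
        rw [hcA w hwA] at hjlt
        omega
      obtain ⟨u, hu, hadj⟩ := maxIndep_dominates hA hwA
      exact ⟨u, hcA u hu, hadj.reachable,
        le_of_eq (SimpleGraph.dist_eq_one_iff_adj.mpr hadj)⟩
    rcases Nat.lt_or_ge j 3 with hj2 | hj3
    · -- j = 2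
      have hj2' : j = 2 := by omega
      subst hj2'
      have hwA : w ∉ A := by
        intro hwA
        rw [hcA w hwA] at hjlt
        omega
      have hwv : w ≠ v := by
        intro hh
        rw [hh, hcv] at hjlt
        omega
      have hne3 : G.dist v w ≠ 3 := by
        intro heq
        exact hv w hwA ⟨fun hh => hwv hh.symm, by rw [heq, hd]⟩
      have := hdist3 v w
      exact ⟨v, hcv, hG.preconnected v w, by omega⟩
    · -- j ≥ 3
      have hjm : j - 3 < m := by
        rcases hval w with ⟨h1, _⟩ | ⟨h1, _⟩ | ⟨hw, h1⟩ <;> omega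
      refine ⟨(e.symm ⟨j - 3, hjm⟩).1, ?_, hG.preconnected _ w, ?_⟩
      · rw [hcB (e.symm ⟨j - 3, hjm⟩), Equiv.apply_symm_apply]
        simp only []
        omega
      · calc G.dist _ w ≤ 3 := hdist3 _ w
          _ ≤ j := hj3


/-- If `G` is connected on `n` vertices with `diam(G) = 3` and there exists a
maximal independent set `A` with `|A| = i(G)` such that `D(G) - A` has an isolated vertex,
then `Γρ(G) = n - i(G) + 1`. -/
theorem grundyPackingChromaticNumber_of_diam_three_singleton {V : Type*} [Fintype V]
    (G : SimpleGraph V) (hG : G.Connected) (hd : graphDiam G = 3)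
    (h : ∃ A : Finset V, IsMaxIndepFinset G A ∧ A.card = indepDomNum G ∧
      ∃ v : V, v ∉ A ∧ ∀ u : V, u ∉ A → ¬ (diamGraph G).Adj v u) :
    grundyPackingChromaticNumber G = Fintype.card V - indepDomNum G + 1 := by
    classical
  obtain ⟨A, hA, hAcard, v, hvA, hv⟩ := h
  obtain ⟨c, hc⟩ := grundy_lb hG hd hA hvA hv
  rw [hAcard] at hc
  have hmem : Fintype.card V - indepDomNum G + 1 ∈
      {k | ∃ c : V → ℕ, IsGreedyPackingColoring G k c} := ⟨c, hc⟩
  have hub : ∀ b ∈ {k | ∃ c : V → ℕ, IsGreedyPackingColoring G k c},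
      b ≤ Fintype.card V - indepDomNum G + 1 := by
    rintro b ⟨c', hc'⟩
    exact grundy_ub hc'
  exact le_antisymm (csSup_le ⟨_, hmem⟩ hub) (le_csSup ⟨_, hub⟩ hmem)
end

section
/- If S is a split graph with diam(S) = 3, then Γρ(S) = Δ(S) + 1, where Δ(S) is the maximum degree of S. -/
open SimpleGraph

/-- If `S` is a split graph with `diam(S) = 3`, then `Γρ(S) = Δ(S) + 1`. -/
theorem grundyPackingChromaticNumber_splitGraph {V : Type*} [Fintype V]
    (G : SimpleGraph V) [DecidableRel G.Adj] (hG : G.Connected)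
    (hsplit : ∃ s : Set V, (∀ u ∈ s, ∀ v ∈ s, u ≠ v → G.Adj u v) ∧
      (∀ u ∉ s, ∀ v ∉ s, ¬ G.Adj u v))
    (hd : graphDiam G = 3) :
    grundyPackingChromaticNumber G = G.maxDegree + 1 := by
  classical
  obtain ⟨s, hclq, hind⟩ := hsplit
  haveI : Nonempty V := hG.nonempty
  have hreach : ∀ u v : V, G.Reachable u v := hG.preconnected
  -- distance at most 3
  have hd3 : ∀ u v : V, G.dist u v ≤ 3 := by
    intro u v
    have h1 : G.dist u v ≤ _root_.eccent G u := Finset.le_sup (Finset.mem_univ v)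
    have h2 : _root_.eccent G u ≤ graphDiam G := Finset.le_sup (Finset.mem_univ u)
    omega
  -- a pair at distance 3
  obtain ⟨u₀, v₀, huv3⟩ : ∃ u v : V, G.dist u v = 3 := by
    obtain ⟨u, -, hu⟩ := Finset.exists_mem_eq_sup (Finset.univ) Finset.univ_nonempty (_root_.eccent G)
    obtain ⟨v, -, hv⟩ :=
      Finset.exists_mem_eq_sup (Finset.univ) Finset.univ_nonempty (fun w => G.dist u w)
    refine ⟨u, v, ?_⟩
    have h1 : graphDiam G = G.dist u v := by
      rw [graphDiam, hu, _root_.eccent, hv]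
    omega
  have hu₀v₀ : u₀ ≠ v₀ := by
    intro h; rw [h, SimpleGraph.dist_self] at huv3; omega
  -- every vertex has a neighbor
  have hnbr : ∀ v : V, ∃ w, G.Adj v w := by
    intro v
    obtain ⟨w, hw⟩ : ∃ w : V, w ≠ v := by
      by_cases h : v = u₀
      · exact ⟨v₀, by rw [h]; exact hu₀v₀.symm⟩
      · exact ⟨u₀, fun hh => h hh.symm⟩
    obtain ⟨p, hp⟩ := (hreach v w).exists_walk_length_eq_dist
    cases p with
    | nil => exact absurd rfl hw
    | cons h q => exact ⟨_, h⟩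
  -- neighbors of vertices outside s lie in s
  have hIs : ∀ v, v ∉ s → ∀ w, G.Adj v w → w ∈ s := by
    intro v hv w hadj
    by_contra hw
    exact hind v hv w hw hadj
  -- every vertex of s is within distance 2 of every vertex
  have hA : ∀ x, x ∈ s → ∀ v, G.dist x v ≤ 2 := by
    intro x hx v
    by_cases hxv : x = v
    · rw [hxv, SimpleGraph.dist_self]; omega
    by_cases hvs : v ∈ s
    · have := SimpleGraph.dist_eq_one_iff_adj.mpr (hclq x hx v hvs hxv); omega
    · obtain ⟨y, hy⟩ := hnbr v
      have hys : y ∈ s := hIs v hvs y hy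
      by_cases hxy : x = y
      · subst hxy
        have := SimpleGraph.dist_eq_one_iff_adj.mpr hy.symm; omega
      · have hp : G.dist x v ≤ (SimpleGraph.Walk.cons (hclq x hx y hys hxy)
            (SimpleGraph.Walk.cons hy.symm SimpleGraph.Walk.nil)).length :=
          SimpleGraph.dist_le _
        simpa using hp
  have hu₀s : u₀ ∉ s := fun h => by have := hA u₀ h v₀; omega
  have hv₀s : v₀ ∉ s := by
    intro h
    have h2 : G.dist u₀ v₀ ≤ 2 := by rw [SimpleGraph.dist_comm]; exact hA v₀ h u₀
    omega
  -- two distinct clique vertices, one adjacent to u₀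
  obtain ⟨x₀, y₀, hx₀s, hy₀s, hxy₀, hux₀⟩ :
      ∃ x y, x ∈ s ∧ y ∈ s ∧ x ≠ y ∧ G.Adj u₀ x := by
    obtain ⟨p, hp⟩ := (hreach u₀ v₀).exists_walk_length_eq_dist
    rw [huv3] at hp
    cases p with
    | nil => simp at hp
    | cons h q =>
      cases q with
      | nil => simp at hp
      | cons h' q' =>
        cases q' with
        | nil => simp at hp
        | cons h'' q'' =>
          have hq0 : q''.length = 0 := by simp only [SimpleGraph.Walk.length_cons] at hp; omega
          have hce := SimpleGraph.Walk.eq_of_length_eq_zero hq0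
          refine ⟨_, _, hIs u₀ hu₀s _ h, ?_, h'.ne, h⟩
          by_contra hb
          exact hind _ hb v₀ hv₀s (hce ▸ h'')
  set sF : Finset V := Finset.univ.filter (· ∈ s) with hsF
  have hmem_sF : ∀ v, v ∈ sF ↔ v ∈ s := by intro v; simp [hsF]
  -- degree of an s-vertex with an outside neighbor is at least |sF|
  have hdeg_ge : ∀ x, x ∈ s → ∀ y, y ∉ s → G.Adj x y → sF.card ≤ G.degree x := by
    intro x hx y hy hxy
    have hsub : insert y (sF.erase x) ⊆ G.neighborFinset x := by
      intro a ha
      rcases Finset.mem_insert.mp ha with rfl | ha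
      · exact (SimpleGraph.mem_neighborFinset _ _ _).mpr hxy
      · obtain ⟨hax, has⟩ := Finset.mem_erase.mp ha
        exact (SimpleGraph.mem_neighborFinset _ _ _).mpr (hclq x hx a ((hmem_sF a).mp has) (Ne.symm hax))
    have h1 : (insert y (sF.erase x)).card = (sF.erase x).card + 1 :=
      Finset.card_insert_of_notMem (fun h => hy ((hmem_sF y).mp (Finset.mem_of_mem_erase h)))
    have h2 : (sF.erase x).card + 1 = sF.card :=
      Finset.card_erase_add_one ((hmem_sF x).mpr hx)
    have h3 := Finset.card_le_card hsub
    rw [SimpleGraph.card_neighborFinset_eq_degree] at h3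
    omega
  have hsΔ : sF.card ≤ G.maxDegree := by
    have h1 := hdeg_ge x₀ hx₀s u₀ hu₀s hux₀.symm
    exact le_trans h1 (G.degree_le_maxDegree x₀)
  have hs2 : 2 ≤ sF.card := by
    refine Finset.one_lt_card.mpr ⟨x₀, (hmem_sF _).mpr hx₀s, y₀, (hmem_sF _).mpr hy₀s, hxy₀⟩
  have hΔ2 : 2 ≤ G.maxDegree := le_trans hs2 hsΔ
  -- UPPER BOUND
  have hub : ∀ k, (∃ c : V → ℕ, IsGreedyPackingColoring G k c) → k ≤ G.maxDegree + 1 := by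
    rintro k ⟨c, ⟨hbnd, hpack⟩, ⟨vt, hvt⟩, hgreedy⟩
    by_cases hk3 : k ≤ 3
    · omega
    push_neg at hk3
    have hcol : ∀ j, 1 ≤ j → j ≤ k → ∃ v, c v = j := by
      intro j hj1 hjk
      rcases eq_or_lt_of_le hjk with rfl | hlt
      · exact ⟨vt, hvt⟩
      · obtain ⟨u, hu, -, -⟩ := hgreedy vt j hj1 (by rw [hvt]; exact hlt)
        exact ⟨u, hu⟩
    set C1 : Finset V := Finset.univ.filter (fun v => c v = 1) with hC1
    set C2 : Finset V := Finset.univ.filter (fun v => c v = 2) with hC2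
    set CB : Finset V := Finset.univ.filter (fun v => 3 ≤ c v) with hCB
    have hsum : C1.card + C2.card + CB.card ≤ Fintype.card V := by
      have hd12 : Disjoint C1 C2 := by
        rw [Finset.disjoint_left]; intro a h1 h2
        have e1 := (Finset.mem_filter.mp h1).2
        have e2 := (Finset.mem_filter.mp h2).2
        omega
      have hd3' : Disjoint (C1 ∪ C2) CB := by
        rw [Finset.disjoint_left]; intro a h1 h2
        have e2 := (Finset.mem_filter.mp h2).2
        rcases Finset.mem_union.mp h1 with h1 | h1
        · have e1 := (Finset.mem_filter.mp h1).2; omega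
        · have e1 := (Finset.mem_filter.mp h1).2; omega
      calc C1.card + C2.card + CB.card = ((C1 ∪ C2) ∪ CB).card := by
            rw [Finset.card_union_of_disjoint hd3', Finset.card_union_of_disjoint hd12]
        _ ≤ Fintype.card V := by
            rw [← Finset.card_univ]; exact Finset.card_le_card (Finset.subset_univ _)
    have hCBcard : k - 2 ≤ CB.card := by
      have hsub : Finset.Icc 3 k ⊆ CB.image c := by
        intro j hj
        rw [Finset.mem_Icc] at hj
        obtain ⟨v, hv⟩ := hcol j (by omega) hj.2
        exact Finset.mem_image.mpr
          ⟨v, Finset.mem_filter.mpr ⟨Finset.mem_univ _, by omega⟩, hv⟩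
      have h1 := Finset.card_le_card hsub
      rw [Nat.card_Icc] at h1
      have h2 := Finset.card_image_le (s := CB) (f := c)
      omega
    have hC2pos : 1 ≤ C2.card := by
      obtain ⟨v, hv⟩ := hcol 2 (by omega) (by omega)
      exact Finset.card_pos.mpr ⟨v, Finset.mem_filter.mpr ⟨Finset.mem_univ _, hv⟩⟩
    have hn1 : ∀ v, c v ≠ 1 → ∃ u, c u = 1 ∧ G.Adj u v := by
      intro v hv
      have h1 : 1 ≤ c v := (hbnd v).1
      obtain ⟨u, hu1, hur, hud⟩ := hgreedy v 1 le_rfl (by omega)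
      have hne : u ≠ v := by intro h; rw [h] at hu1; exact hv hu1
      have hpos : 0 < G.dist u v := hur.pos_dist_of_ne hne
      have heq : G.dist u v = 1 := by omega
      exact ⟨u, hu1, SimpleGraph.dist_eq_one_iff_adj.mp heq⟩
    have hcov : Fintype.card V ≤ C1.card + G.maxDegree := by
      by_cases hcase : ∃ z ∈ s, c z = 1
      · obtain ⟨z, hzs, hz1⟩ := hcase
        have hsub : Finset.univ ⊆ C1 ∪ G.neighborFinset z := by
          intro v _
          by_cases hv1 : c v = 1
          · exact Finset.mem_union_left _ (Finset.mem_filter.mpr ⟨Finset.mem_univ _, hv1⟩)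
          · refine Finset.mem_union_right _ ((SimpleGraph.mem_neighborFinset _ _ _).mpr ?_)
            by_cases hvs : v ∈ s
            · exact hclq z hzs v hvs (fun h => hv1 (h ▸ hz1))
            · obtain ⟨u, hu1, huv⟩ := hn1 v hv1
              have hus : u ∈ s := hIs v hvs u huv.symm
              have huz : u = z := by
                by_contra hne
                have hlt := hpack u z hne (by rw [hu1, hz1]) (hreach u z)
                have heq := SimpleGraph.dist_eq_one_iff_adj.mpr (hclq u hus z hzs hne)
                rw [hu1] at hlt; omega
              exact huz ▸ huv
        have h1 : Fintype.card V ≤ (C1 ∪ G.neighborFinset z).card := by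
          rw [← Finset.card_univ]; exact Finset.card_le_card hsub
        have h2 := Finset.card_union_le C1 (G.neighborFinset z)
        have h3 : (G.neighborFinset z).card = G.degree z :=
          G.card_neighborFinset_eq_degree z
        have h4 := G.degree_le_maxDegree z
        omega
      · push_neg at hcase
        have hsub : Finset.univ ⊆ C1 ∪ sF := by
          intro v _
          by_cases hvs : v ∈ s
          · exact Finset.mem_union_right _ ((hmem_sF v).mpr hvs)
          · refine Finset.mem_union_left _ (Finset.mem_filter.mpr ⟨Finset.mem_univ _, ?_⟩)
            by_contra hv1
            obtain ⟨u, hu1, huv⟩ := hn1 v hv1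
            exact hcase u (hIs v hvs u huv.symm) hu1
        have h1 : Fintype.card V ≤ (C1 ∪ sF).card := by
          rw [← Finset.card_univ]; exact Finset.card_le_card hsub
        have h2 := Finset.card_union_le C1 sF
        omega
    omega
  -- LOWER BOUND : construct a greedy packing (Δ+1)-coloring
  obtain ⟨z, hzs, hzdeg⟩ : ∃ z ∈ s, G.degree z = G.maxDegree := by
    obtain ⟨y, hy⟩ := G.exists_maximal_degree_vertex
    by_cases hys : y ∈ s
    · exact ⟨y, hys, hy.symm⟩
    · obtain ⟨x, hx⟩ := hnbr y
      have hxs : x ∈ s := hIs y hys x hx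
      have h1 : G.degree y ≤ sF.card := by
        rw [← SimpleGraph.card_neighborFinset_eq_degree]
        apply Finset.card_le_card
        intro a ha
        exact (hmem_sF a).mpr (hIs y hys a ((SimpleGraph.mem_neighborFinset _ _ _).mp ha))
      have h2 := hdeg_ge x hxs y hys hx.symm
      have h3 := G.degree_le_maxDegree x
      exact ⟨x, hxs, by omega⟩
  obtain ⟨w, hws, hwz⟩ : ∃ w ∈ s, w ≠ z := by
    by_cases h : z = x₀
    · exact ⟨y₀, hy₀s, fun hh => hxy₀ (h.symm.trans hh.symm)⟩
    · exact ⟨x₀, hx₀s, fun hh => h hh.symm⟩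
  set C1f : Finset V := insert z (Finset.univ.filter (fun v => v ∉ s ∧ ¬ G.Adj z v)) with hC1f
  set R : Finset V := (G.neighborFinset z).erase w with hR
  have hwN : w ∈ G.neighborFinset z :=
    (SimpleGraph.mem_neighborFinset _ _ _).mpr (hclq z hzs w hws (Ne.symm hwz))
  have hRcard : R.card = G.maxDegree - 1 := by
    rw [hR, Finset.card_erase_of_mem hwN, SimpleGraph.card_neighborFinset_eq_degree, hzdeg]
  have hC1N : ∀ v ∈ C1f, ¬ G.Adj z v := by
    intro v hv
    rcases Finset.mem_insert.mp hv with rfl | hv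
    · exact G.irrefl
    · exact (Finset.mem_filter.mp hv).2.2
  have hwC1 : w ∉ C1f := fun h => hC1N w h ((SimpleGraph.mem_neighborFinset _ _ _).mp hwN)
  have hRC1 : ∀ v ∈ R, v ∉ C1f := by
    intro v hv hv1
    exact hC1N v hv1 ((SimpleGraph.mem_neighborFinset _ _ _).mp (Finset.mem_of_mem_erase hv))
  have hRw : ∀ v ∈ R, v ≠ w := fun v hv => Finset.ne_of_mem_erase hv
  have htri : ∀ v, v ∈ C1f ∨ v = w ∨ v ∈ R := by
    intro v
    by_cases h1 : v ∈ C1f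
    · exact Or.inl h1
    right
    by_cases h2 : v = w
    · exact Or.inl h2
    right
    rw [hR, Finset.mem_erase]
    refine ⟨h2, (SimpleGraph.mem_neighborFinset _ _ _).mpr ?_⟩
    have hvz : v ≠ z := fun h => h1 (h ▸ Finset.mem_insert_self z _)
    by_cases hvs : v ∈ s
    · exact hclq z hzs v hvs (Ne.symm hvz)
    · by_contra hadj
      exact h1 (Finset.mem_insert.mpr (Or.inr (Finset.mem_filter.mpr
        ⟨Finset.mem_univ _, hvs, hadj⟩)))
  have hC1ind : ∀ u ∈ C1f, ∀ v ∈ C1f, ¬ G.Adj u v := by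
    intro u hu v hv hadj
    rcases Finset.mem_insert.mp hu with rfl | hu'
    · exact hC1N v hv hadj
    · rcases Finset.mem_insert.mp hv with rfl | hv'
      · exact hC1N u hu hadj.symm
      · exact hind u (Finset.mem_filter.mp hu').2.1 v (Finset.mem_filter.mp hv').2.1 hadj
  have e : {x // x ∈ R} ≃ Fin R.card := Fintype.equivFinOfCardEq (Fintype.card_coe R)
  set c : V → ℕ := fun v =>
    if v ∈ C1f then 1 else if v = w then 2
    else if h : v ∈ R then ((e ⟨v, h⟩ : Fin R.card) : ℕ) + 3 else 0 with hc
  have hc1 : ∀ v ∈ C1f, c v = 1 := by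
    intro v hv; rw [hc]; simp only [if_pos hv]
  have hcw : c w = 2 := by
    simp [hc, hwC1]
  have hcR : ∀ v, ∀ h : v ∈ R, c v = ((e ⟨v, h⟩ : Fin R.card) : ℕ) + 3 := by
    intro v h
    simp only [hc, if_neg (hRC1 v h), if_neg (hRw v h), dif_pos h]
  have hcR' : ∀ v ∈ R, 3 ≤ c v ∧ c v ≤ G.maxDegree + 1 := by
    intro v h
    rw [hcR v h]
    have h1 := (e ⟨v, h⟩).isLt
    omega
  have hecolor : ∀ i : Fin R.card, c ((e.symm i : {x // x ∈ R}) : V) = (i : ℕ) + 3 := by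
    intro i
    rw [hcR _ (e.symm i).2]
    congr 2
    have h1 : (⟨((e.symm i : {x // x ∈ R}) : V), (e.symm i).2⟩ : {x // x ∈ R}) = e.symm i :=
      Subtype.coe_eta _ _
    rw [h1, Equiv.apply_symm_apply]
  have hgpc : IsGreedyPackingColoring G (G.maxDegree + 1) c := by
    refine ⟨⟨?_, ?_⟩, ?_, ?_⟩
    · intro v
      rcases htri v with h | rfl | h
      · rw [hc1 v h]; omega
      · rw [hcw]; omega
      · have := hcR' v h; omega
    · intro u v huv hcuv hr
      rcases htri u with hu | rfl | hu
      · rcases htri v with hv | rfl | hv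
        · rw [hc1 u hu]
          have h1 : 0 < G.dist u v := hr.pos_dist_of_ne huv
          have h2 : G.dist u v ≠ 1 := by
            intro h
            exact hC1ind u hu v hv (SimpleGraph.dist_eq_one_iff_adj.mp h)
          omega
        · rw [hc1 u hu, hcw] at hcuv; omega
        · have := (hcR' v hv).1; rw [hc1 u hu] at hcuv; omega
      · rcases htri v with hv | rfl | hv
        · rw [hcw, hc1 v hv] at hcuv; omega
        · exact absurd rfl huv
        · have := (hcR' v hv).1; rw [hcw] at hcuv; omega
      · rcases htri v with hv | rfl | hv
        · have := (hcR' u hu).1; rw [hc1 v hv] at hcuv; omega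
        · have := (hcR' u hu).1; rw [hcw] at hcuv; omega
        · exfalso
          rw [hcR u hu, hcR v hv] at hcuv
          have h1 : e ⟨u, hu⟩ = e ⟨v, hv⟩ := Fin.ext (by omega)
          have h2 := e.injective h1
          exact huv (congrArg Subtype.val h2)
    · refine ⟨((e.symm ⟨G.maxDegree - 2, by rw [hRcard]; omega⟩ : {x // x ∈ R}) : V), ?_⟩
      rw [hecolor]
      show G.maxDegree - 2 + 3 = G.maxDegree + 1
      omega
    · intro v j hj1 hjv
      rcases htri v with hv | rfl | hv
      · rw [hc1 v hv] at hjv; omega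
      · rw [hcw] at hjv
        have hj : j = 1 := by omega
        subst hj
        refine ⟨z, hc1 z (Finset.mem_insert_self z _), hreach z v, ?_⟩
        have h1 : G.dist z v = 1 :=
          SimpleGraph.dist_eq_one_iff_adj.mpr (hclq z hzs v hws (Ne.symm hwz))
        omega
      · have hzv : G.Adj z v :=
          (SimpleGraph.mem_neighborFinset _ _ _).mp (Finset.mem_of_mem_erase hv)
        rcases Nat.lt_or_ge j 3 with hj3 | hj3
        · interval_cases j
          · refine ⟨z, hc1 z (Finset.mem_insert_self z _), hreach z v, ?_⟩
            rw [SimpleGraph.dist_eq_one_iff_adj.mpr hzv]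
          · refine ⟨w, hcw, hreach w v, hA w hws v⟩
        · have hjub : j ≤ G.maxDegree := by
            have := (hcR' v hv).2; omega
          refine ⟨((e.symm ⟨j - 3, by rw [hRcard]; omega⟩ : {x // x ∈ R}) : V), ?_,
            hreach _ v, ?_⟩
          · rw [hecolor]
            show j - 3 + 3 = j
            omega
          · exact le_trans (hd3 _ v) hj3
  have hmem : G.maxDegree + 1 ∈ {k | ∃ c : V → ℕ, IsGreedyPackingColoring G k c} := ⟨c, hgpc⟩
  have hbdd : ∀ k ∈ {k | ∃ c : V → ℕ, IsGreedyPackingColoring G k c}, k ≤ G.maxDegree + 1 :=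
    fun k hk => hub k hk
  rw [grundyPackingChromaticNumber]
  exact le_antisymm (csSup_le ⟨_, hmem⟩ hbdd) (le_csSup ⟨G.maxDegree + 1, hbdd⟩ hmem)
end

section
/- Let G be a connected graph on n vertices with diam(G) = 3. Then χρ(G) = n − m'(G) + 2, where m'(G) is the maximum, over all maximal independent sets A of G, of |A| + ω(D(G) − A), and ω(D(G) − A) denotes the clique number of the graph obtained from the diametrical graph D(G) by deleting the vertices of A. -/
open SimpleGraph

section Aux

open Finset in
lemma exists_maxIndep_superset {V : Type*} [Fintype V] (G : SimpleGraph V) (s : Finset V)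
    (hs : IsIndepFinset G s) : ∃ t : Finset V, IsMaxIndepFinset G t ∧ s ⊆ t := by
  classical
  set T : Finset (Finset V) := Finset.univ.filter (fun t => IsIndepFinset G t ∧ s ⊆ t) with hT
  have hsT : s ∈ T := by simp [hT, hs]
  obtain ⟨t, htT, hmax⟩ := T.exists_max_image Finset.card ⟨s, hsT⟩
  simp only [hT, Finset.mem_filter, Finset.mem_univ, true_and] at htT
  refine ⟨t, ⟨htT.1, ?_⟩, htT.2⟩
  intro t' ht' hsub
  refine Finset.eq_of_subset_of_card_le hsub (hmax t' ?_)
  simp [hT, ht', htT.2.trans hsub]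

end Aux

/-- If `G` is connected on `n` vertices with `diam(G) = 3`, then
`χρ(G) = n - m'(G) + 2`, where `m'(G)` is the maximum over all maximal independent sets `A`
of `G` of `|A| + ω(D(G) - A)`. -/
theorem packingChromaticNumber_of_diam_three {V : Type*} [Fintype V] (G : SimpleGraph V)
    (hG : G.Connected) (hd : graphDiam G = 3) :
    packingChromaticNumber G =
      Fintype.card V -
        sSup {t : ℕ | ∃ A Q : Finset V, IsMaxIndepFinset G A ∧
          IsCliqueFinsetOn (diamGraph G) (↑A)ᶜ Q ∧ t = A.card + Q.card} + 2 := by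

  classical
  have hV : Nonempty V := hG.nonempty
  set n := Fintype.card V with hn
  set S : Set ℕ := {t : ℕ | ∃ A Q : Finset V, IsMaxIndepFinset G A ∧
      IsCliqueFinsetOn (diamGraph G) (↑A)ᶜ Q ∧ t = A.card + Q.card} with hS
  -- distances are at most 3
  have hle3 : ∀ u v : V, G.dist u v ≤ 3 := by
    intro u v
    have h1 : G.dist u v ≤ _root_.eccent G u := Finset.le_sup (Finset.mem_univ v)
    have h2 : _root_.eccent G u ≤ graphDiam G := Finset.le_sup (Finset.mem_univ u)
    omega
  have hpos : ∀ u v : V, u ≠ v → 1 ≤ G.dist u v := fun u v h => hG.pos_dist_of_ne h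
  have hSbdd : ∀ t ∈ S, t ≤ n := by
    rintro t ⟨A, Q, hA, hQ, rfl⟩
    have hdisj : Disjoint A Q := by
      rw [Finset.disjoint_left]
      intro a haA haQ
      exact (hQ.1 haQ) haA
    calc A.card + Q.card = (A ∪ Q).card := (Finset.card_union_of_disjoint hdisj).symm
      _ ≤ n := Finset.card_le_univ _
  have hSne : S.Nonempty := by
    obtain ⟨A, hA, -⟩ := exists_maxIndep_superset G ∅ (by intro u hu; simp at hu)
    exact ⟨A.card, A, ∅, hA, ⟨by simp, by simp⟩, by simp⟩
  set m := sSup S with hm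
  have hmS : m ∈ S := Nat.sSup_mem hSne ⟨n, hSbdd⟩
  have hmn : m ≤ n := hSbdd m hmS
  -- key bound: any independent set plus diametrical clique disjoint from it has sum ≤ m
  have hkey : ∀ A₁ A₂ : Finset V, IsIndepFinset G A₁ →
      (∀ u ∈ A₂, ∀ v ∈ A₂, u ≠ v → G.dist u v = 3) → Disjoint A₁ A₂ →
      A₁.card + A₂.card ≤ m := by
    intro A₁ A₂ h1 h2 hdisj
    obtain ⟨A, hA, hsub⟩ := exists_maxIndep_superset G A₁ h1
    set Q := A₂ \ A with hQdef
    have hQc : IsCliqueFinsetOn (diamGraph G) (↑A)ᶜ Q := by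
      constructor
      · intro q hq
        simp only [hQdef, Finset.coe_sdiff, Set.mem_diff, Finset.mem_coe] at hq
        simpa using hq.2
      · intro u hu v hv huv
        exact ⟨huv, by
          rw [hd]
          exact h2 u (Finset.mem_sdiff.mp hu).1 v (Finset.mem_sdiff.mp hv).1 huv⟩
    have hmem : A.card + Q.card ∈ S := ⟨A, Q, hA, hQc, rfl⟩
    have hle : A.card + Q.card ≤ m := le_csSup ⟨n, fun t ht => hSbdd t ht⟩ hmem
    have hc1 : Q.card + (A₂ ∩ A).card = A₂.card := Finset.card_sdiff_add_card_inter A₂ A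
    have hc2 : A₁.card + (A₂ ∩ A).card ≤ A.card := by
      have hd2 : Disjoint A₁ (A₂ ∩ A) := hdisj.mono_right Finset.inter_subset_left
      calc A₁.card + (A₂ ∩ A).card = (A₁ ∪ (A₂ ∩ A)).card :=
            (Finset.card_union_of_disjoint hd2).symm
        _ ≤ A.card := Finset.card_le_card (Finset.union_subset hsub Finset.inter_subset_right)
    omega
  -- upper bound construction
  have hup : (n - m + 2) ∈ {k | ∃ c : V → ℕ, IsPackingColoring G k c} := by
    obtain ⟨A, Q, hA, hQ, hcard⟩ := hmS
    have hdisjAQ : Disjoint A Q := by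
      rw [Finset.disjoint_left]; intro a haA haQ; exact (hQ.1 haQ) haA
    set R : Finset V := (A ∪ Q)ᶜ with hR
    have hRcard : R.card = n - m := by
      rw [hR, Finset.card_compl, Finset.card_union_of_disjoint hdisjAQ, hcard]
    let e : ↥R ≃ Fin R.card := Fintype.equivFinOfCardEq (Fintype.card_coe R)
    set c : V → ℕ := fun v =>
      if v ∈ A then 1 else if v ∈ Q then 2 else
        if h : v ∈ R then 3 + (e ⟨v, h⟩ : ℕ) else 0 with hc
    have hcval : ∀ v, (v ∈ A ∧ c v = 1) ∨ (v ∈ Q ∧ c v = 2) ∨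
        (∃ h : v ∈ R, c v = 3 + (e ⟨v, h⟩ : ℕ)) := by
      intro v
      by_cases hvA : v ∈ A
      · exact Or.inl ⟨hvA, by simp [hc, hvA]⟩
      by_cases hvQ : v ∈ Q
      · exact Or.inr (Or.inl ⟨hvQ, by simp [hc, hvA, hvQ]⟩)
      have hvR : v ∈ R := by simp [hR, hvA, hvQ]
      exact Or.inr (Or.inr ⟨hvR, by simp [hc, hvA, hvQ, hvR]⟩)
    have hpack : IsPackingColoring G (R.card + 2) c := by
      constructor
      · intro v
        rcases hcval v with ⟨_, hv⟩ | ⟨_, hv⟩ | ⟨hvR, hv⟩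
        · omega
        · omega
        · have := (e ⟨v, hvR⟩).2
          omega
      · intro u v huv hcc hr
        rcases hcval u with ⟨huA, hu⟩ | ⟨huQ, hu⟩ | ⟨huR, hu⟩ <;>
          rcases hcval v with ⟨hvA, hv⟩ | ⟨hvQ, hv⟩ | ⟨hvR, hv⟩
        · have hnotadj : ¬ G.Adj u v := hA.1 u huA v hvA
          have h1 : G.dist u v ≠ 1 := fun h => hnotadj (SimpleGraph.dist_eq_one_iff_adj.mp h)
          have h0 := hpos u v huv
          omega
        · omega
        · have := (e ⟨v, hvR⟩).2; omega
        · omega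
        · have hadj : (diamGraph G).Adj u v := hQ.2 u huQ v hvQ huv
          have h3 : G.dist u v = 3 := by rw [hadj.2, hd]
          omega
        · have := (e ⟨v, hvR⟩).2; omega
        · have := (e ⟨u, huR⟩).2; omega
        · have := (e ⟨u, huR⟩).2; omega
        · exfalso
          have heq : e ⟨u, huR⟩ = e ⟨v, hvR⟩ := by
            apply Fin.ext; omega
          have := e.injective heq
          exact huv (by simpa using congrArg Subtype.val this)
    rw [← hRcard]
    exact ⟨c, hpack⟩
  unfold packingChromaticNumber
  refine le_antisymm (Nat.sInf_le hup) (le_csInf ⟨_, hup⟩ ?_)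
  rintro k ⟨c, hrange, hsep⟩
  -- k ≥ 2 since G has an edge
  have hk2 : 2 ≤ k := by
    obtain ⟨v, -, hv⟩ :=
      Finset.exists_mem_eq_sup (Finset.univ : Finset V) Finset.univ_nonempty (_root_.eccent G)
    have hev : _root_.eccent G v = 3 := by rw [← hv]; exact hd
    obtain ⟨u, -, hu⟩ :=
      Finset.exists_mem_eq_sup (Finset.univ : Finset V) Finset.univ_nonempty
        (fun w => G.dist v w)
    have hdist3 : G.dist v u = 3 := by rw [← hu]; exact hev
    obtain ⟨p⟩ := hG.preconnected v u
    cases p with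
    | nil => simp [SimpleGraph.dist_self] at hdist3
    | @cons _ w _ hadj q =>
        have hne := hadj.ne
        have h1 : G.dist v w = 1 := SimpleGraph.dist_eq_one_iff_adj.mpr hadj
        have hcv := hrange v
        have hcw := hrange w
        by_contra hk
        have hcc : c v = c w := by omega
        have := hsep v w hne hcc hadj.reachable
        omega
  set A₁ := Finset.univ.filter (fun v => c v = 1) with hA₁
  set A₂ := Finset.univ.filter (fun v => c v = 2) with hA₂
  set R' := Finset.univ.filter (fun v => 3 ≤ c v) with hR'
  have hunion : A₁ ∪ A₂ ∪ R' = Finset.univ := by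
    ext v
    simp only [hA₁, hA₂, hR', Finset.mem_union, Finset.mem_filter, Finset.mem_univ, true_and,
      iff_true]
    have := (hrange v).1; omega
  have hd12 : Disjoint A₁ A₂ := by
    rw [Finset.disjoint_left]
    intro a ha hb
    simp only [hA₁, hA₂, Finset.mem_filter, Finset.mem_univ, true_and] at ha hb
    omega
  have hd3 : Disjoint (A₁ ∪ A₂) R' := by
    rw [Finset.disjoint_left]
    intro a ha hb
    simp only [hA₁, hA₂, hR', Finset.mem_union, Finset.mem_filter, Finset.mem_univ,
      true_and] at ha hb
    omega
  have hcards : A₁.card + A₂.card + R'.card = n := by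
    rw [← Finset.card_union_of_disjoint hd12, ← Finset.card_union_of_disjoint hd3, hunion,
      Finset.card_univ]
  have hR'card : R'.card ≤ k - 2 := by
    have hinj : Set.InjOn c ↑R' := by
      intro u hu v hv hcc
      by_contra hne
      simp only [Finset.coe_filter, Set.mem_setOf_eq, hR'] at hu hv
      have := hsep u v hne hcc (hG.preconnected u v)
      have := hle3 u v
      omega
    have h1 : (R'.image c).card = R'.card := Finset.card_image_of_injOn hinj
    have h2 : R'.image c ⊆ Finset.Icc 3 k := by
      intro x hx
      simp only [Finset.mem_image] at hx
      obtain ⟨v, hv, rfl⟩ := hx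
      simp only [hR', Finset.mem_filter, Finset.mem_univ, true_and] at hv
      have := (hrange v).2
      simp only [Finset.mem_Icc]
      omega
    have h3 := Finset.card_le_card h2
    rw [Nat.card_Icc] at h3
    omega
  have hA₁i : IsIndepFinset G A₁ := by
    intro u hu v hv hadj
    simp only [hA₁, Finset.mem_filter, Finset.mem_univ, true_and] at hu hv
    have hne := hadj.ne
    have := hsep u v hne (by omega) hadj.reachable
    have h1 : G.dist u v = 1 := SimpleGraph.dist_eq_one_iff_adj.mpr hadj
    omega
  have hA₂d : ∀ u ∈ A₂, ∀ v ∈ A₂, u ≠ v → G.dist u v = 3 := by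
    intro u hu v hv hne
    simp only [hA₂, Finset.mem_filter, Finset.mem_univ, true_and] at hu hv
    have := hsep u v hne (by omega) (hG.preconnected u v)
    have := hle3 u v
    omega
  have hsum := hkey A₁ A₂ hA₁i hA₂d hd12
  omega
end

section
/- Let n ≥ 4 and let G = K_{n,n} − M be the graph obtained from the complete bipartite graph with parts {u_1,…,u_n} and {v_1,…,v_n} by deleting the perfect matching M = {u_i v_i : 1 ≤ i ≤ n}. Then χρ(G) = n + 1. -/
open SimpleGraph

namespace Aux19
variable {n : ℕ}

lemma adjLR {i j : Fin n} (h : i ≠ j) :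
    (completeBipartiteMinusMatching n).Adj (Sum.inl i) (Sum.inr j) := h

lemma adjRL {i j : Fin n} (h : i ≠ j) :
    (completeBipartiteMinusMatching n).Adj (Sum.inr i) (Sum.inl j) := h

lemma not_adjLL (i j : Fin n) :
    ¬ (completeBipartiteMinusMatching n).Adj (Sum.inl i) (Sum.inl j) := fun h => h

lemma not_adjRR (i j : Fin n) :
    ¬ (completeBipartiteMinusMatching n).Adj (Sum.inr i) (Sum.inr j) := fun h => h

lemma adj_LR_iff (i j : Fin n) :
    (completeBipartiteMinusMatching n).Adj (Sum.inl i) (Sum.inr j) ↔ i ≠ j := Iff.rfl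

lemma exists_third (hn : 3 ≤ n) (i j : Fin n) : ∃ k : Fin n, k ≠ i ∧ k ≠ j := by
  by_contra h
  push_neg at h
  have hsub : (Finset.univ : Finset (Fin n)) ⊆ {i, j} := by
    intro k _
    simp only [Finset.mem_insert, Finset.mem_singleton]
    rcases eq_or_ne k i with hk | hk
    · exact Or.inl hk
    · exact Or.inr (h k hk)
  have := Finset.card_le_card hsub
  simp only [Finset.card_univ, Fintype.card_fin] at this
  have h2 : ({i, j} : Finset (Fin n)).card ≤ 2 :=
    (Finset.card_insert_le _ _).trans (by simp)
  omega

lemma distLR {i j : Fin n} (h : i ≠ j) :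
    (completeBipartiteMinusMatching n).dist (Sum.inl i) (Sum.inr j) ≤ 1 := by
  simpa using SimpleGraph.dist_le (Walk.cons (adjLR h) Walk.nil)

lemma distLL (hn : 3 ≤ n) (i j : Fin n) :
    (completeBipartiteMinusMatching n).dist (Sum.inl i) (Sum.inl j) ≤ 2 := by
  obtain ⟨k, hki, hkj⟩ := exists_third hn i j
  simpa using SimpleGraph.dist_le
    (Walk.cons (adjLR hki.symm) (Walk.cons (adjRL hkj) Walk.nil))

lemma distRR (hn : 3 ≤ n) (i j : Fin n) :
    (completeBipartiteMinusMatching n).dist (Sum.inr i) (Sum.inr j) ≤ 2 := by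
  obtain ⟨k, hki, hkj⟩ := exists_third hn i j
  simpa using SimpleGraph.dist_le
    (Walk.cons (adjRL hki.symm) (Walk.cons (adjLR hkj) Walk.nil))

lemma exists_ne' (hn : 3 ≤ n) (i : Fin n) : ∃ j : Fin n, j ≠ i := by
  obtain ⟨k, hk, _⟩ := exists_third hn i i
  exact ⟨k, hk⟩

lemma walkLRsame (hn : 3 ≤ n) (i : Fin n) :
    ∃ p : (completeBipartiteMinusMatching n).Walk (Sum.inl i) (Sum.inr i), p.length = 3 := by
  obtain ⟨j, hj⟩ := exists_ne' hn i
  obtain ⟨k, hkj, hki⟩ := exists_third hn j i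
  exact ⟨Walk.cons (adjLR hj.symm) (Walk.cons (adjRL hkj.symm)
    (Walk.cons (adjLR hki) Walk.nil)), rfl⟩

lemma distLRsame (hn : 3 ≤ n) (i : Fin n) :
    (completeBipartiteMinusMatching n).dist (Sum.inl i) (Sum.inr i) ≤ 3 := by
  obtain ⟨p, hp⟩ := walkLRsame hn i
  simpa [hp] using SimpleGraph.dist_le p

lemma reach (hn : 3 ≤ n) (u v : Fin n ⊕ Fin n) :
    (completeBipartiteMinusMatching n).Reachable u v := by
  have key : ∀ i j : Fin n, (completeBipartiteMinusMatching n).Reachable (Sum.inl i) (Sum.inr j) := by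
    intro i j
    rcases eq_or_ne i j with rfl | h
    · obtain ⟨p, _⟩ := walkLRsame hn i
      exact ⟨p⟩
    · exact (adjLR h).reachable
  rcases u with i | i <;> rcases v with j | j
  · exact ((key i j).trans (key j j).symm : _)
  · exact key i j
  · exact (key j i).symm
  · exact ((key j i).symm.trans (key j j) : _)

lemma dist_le_three (hn : 3 ≤ n) (u v : Fin n ⊕ Fin n) :
    (completeBipartiteMinusMatching n).dist u v ≤ 3 := by
  rcases u with i | i <;> rcases v with j | j
  · exact (distLL hn i j).trans (by norm_num)
  · rcases eq_or_ne i j with rfl | h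
    · exact distLRsame hn i
    · exact (distLR h).trans (by norm_num)
  · rw [SimpleGraph.dist_comm]
    rcases eq_or_ne j i with rfl | h
    · exact distLRsame hn j
    · exact (distLR h).trans (by norm_num)
  · exact (distRR hn i j).trans (by norm_num)

lemma indep_card_bound {n : ℕ} (s : Finset (Fin n ⊕ Fin n)) (T : Finset (Fin n))
    (hmatch : ∀ i j : Fin n, Sum.inl i ∈ s → Sum.inr j ∈ s → i = j)
    (hL : ∀ i, Sum.inl i ∈ s → i ∈ T) (hR : ∀ j, Sum.inr j ∈ s → j ∈ T) :
    s.card ≤ max T.card 2 := by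
  classical
  set L : Finset (Fin n) := T.filter (fun i => Sum.inl i ∈ s) with hLdef
  set R : Finset (Fin n) := T.filter (fun j => Sum.inr j ∈ s) with hRdef
  have hsub : s ⊆ L.image Sum.inl ∪ R.image Sum.inr := by
    intro x hx
    rcases x with i | i
    · exact Finset.mem_union_left _ (Finset.mem_image_of_mem _
        (Finset.mem_filter.mpr ⟨hL i hx, hx⟩))
    · exact Finset.mem_union_right _ (Finset.mem_image_of_mem _
        (Finset.mem_filter.mpr ⟨hR i hx, hx⟩))
  have hcard : s.card ≤ L.card + R.card :=
    (Finset.card_le_card hsub).trans ((Finset.card_union_le _ _).trans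
      (by gcongr <;> exact Finset.card_image_le))
  rcases Finset.eq_empty_or_nonempty R with hRe | ⟨j0, hj0⟩
  · have : L.card ≤ T.card := Finset.card_le_card (Finset.filter_subset _ _)
    simp [hRe] at hcard
    exact hcard.trans (this.trans (le_max_left _ _))
  · rcases Finset.eq_empty_or_nonempty L with hLe | ⟨i0, hi0⟩
    · have : R.card ≤ T.card := Finset.card_le_card (Finset.filter_subset _ _)
      simp [hLe] at hcard
      exact hcard.trans (this.trans (le_max_left _ _))
    · have hj0s : Sum.inr j0 ∈ s := (Finset.mem_filter.mp hj0).2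
      have hi0s : Sum.inl i0 ∈ s := (Finset.mem_filter.mp hi0).2
      have hL1 : L ⊆ {j0} := by
        intro i hi
        have := hmatch i j0 (Finset.mem_filter.mp hi).2 hj0s
        simp [this]
      have hR1 : R ⊆ {i0} := by
        intro j hj
        have := hmatch i0 j hi0s (Finset.mem_filter.mp hj).2
        simp [← this]
      have := Finset.card_le_card hL1
      have := Finset.card_le_card hR1
      simp only [Finset.card_singleton] at *
      omega


lemma lower_bound {n : ℕ} (hn : 4 ≤ n) (k : ℕ) (c : Fin n ⊕ Fin n → ℕ)
    (hc : IsPackingColoring (completeBipartiteMinusMatching n) k c) : n + 1 ≤ k := by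
  classical
  obtain ⟨hbd, hpack⟩ := hc
  have hn3 : 3 ≤ n := by omega
  have hne01 : (⟨0, by omega⟩ : Fin n) ≠ ⟨1, by omega⟩ := by
    intro h; exact absurd (congrArg Fin.val h) (by simp)
  have hk2 : 2 ≤ k := by
    by_contra hk
    push_neg at hk
    have hb1 := hbd (Sum.inl ⟨0, by omega⟩)
    have hb2 := hbd (Sum.inr ⟨1, by omega⟩)
    have hcc : c (Sum.inl ⟨0, by omega⟩) = c (Sum.inr ⟨1, by omega⟩) := by omega
    have hp := hpack _ _ (by simp) hcc (adjLR hne01).reachable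
    have hd := distLR hne01
    omega
  set C : ℕ → Finset (Fin n ⊕ Fin n) :=
    fun j => Finset.univ.filter (fun v => c v = j) with hCdef
  have hmemC : ∀ j v, v ∈ C j ↔ c v = j := by
    intro j v; simp [hCdef]
  have hfib : (Finset.univ : Finset (Fin n ⊕ Fin n)).card =
      ∑ j ∈ Finset.Icc 1 k, (C j).card :=
    Finset.card_eq_sum_card_fiberwise
      (fun v _ => Finset.mem_Icc.mpr ⟨(hbd v).1, (hbd v).2⟩)
  have hcardU : (Finset.univ : Finset (Fin n ⊕ Fin n)).card = 2 * n := by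
    simp [Finset.card_univ]; omega
  have h3 : ∀ j, 3 ≤ j → (C j).card ≤ 1 := by
    intro j hj
    refine Finset.card_le_one.mpr (fun u hu v hv => ?_)
    by_contra hne
    have hcu := (hmemC j u).mp hu
    have hcv := (hmemC j v).mp hv
    have hp := hpack u v hne (hcu.trans hcv.symm) (reach hn3 u v)
    have hd := dist_le_three hn3 u v
    omega
  have hmatch1 : ∀ i j : Fin n, Sum.inl i ∈ C 1 → Sum.inr j ∈ C 1 → i = j := by
    intro i j hi hj
    by_contra hij
    have hci := (hmemC 1 _).mp hi
    have hcj := (hmemC 1 _).mp hj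
    have hp := hpack _ _ (by simp) (hci.trans hcj.symm) (adjLR hij).reachable
    have hd := distLR hij
    omega
  have hB12 : (C 1).card + (C 2).card ≤ n + 1 := by
    by_cases h2 : (C 2).card ≤ 1
    · have h1 := indep_card_bound (C 1) Finset.univ hmatch1
        (fun _ _ => Finset.mem_univ _) (fun _ _ => Finset.mem_univ _)
      rw [Finset.card_univ, Fintype.card_fin, max_eq_left (by omega)] at h1
      omega
    · push_neg at h2
      obtain ⟨a, ha, b, hb, hab⟩ := Finset.one_lt_card.mp h2
      have pairlem : ∀ u v, u ∈ C 2 → v ∈ C 2 → u ≠ v →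
          ∃ a0 : Fin n, (u = Sum.inl a0 ∧ v = Sum.inr a0) ∨
            (u = Sum.inr a0 ∧ v = Sum.inl a0) := by
        intro u v hu hv huv
        have hcu := (hmemC 2 u).mp hu
        have hcv := (hmemC 2 v).mp hv
        have hp := hpack u v huv (hcu.trans hcv.symm) (reach hn3 u v)
        rw [hcu] at hp
        rcases u with i | i <;> rcases v with j | j
        · exact absurd (distLL hn3 i j) (by omega)
        · rcases eq_or_ne i j with rfl | hij
          · exact ⟨i, Or.inl ⟨rfl, rfl⟩⟩
          · have := distLR hij; omega
        · rcases eq_or_ne j i with rfl | hij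
          · exact ⟨j, Or.inr ⟨rfl, rfl⟩⟩
          · have := distLR hij
            rw [SimpleGraph.dist_comm] at hp; omega
        · exact absurd (distRR hn3 i j) (by omega)
      obtain ⟨a0, h0⟩ := pairlem a b ha hb hab
      have hinl : Sum.inl a0 ∈ C 2 := by
        rcases h0 with ⟨h1, h2'⟩ | ⟨h1, h2'⟩
        · rwa [h1] at ha
        · rwa [h2'] at hb
      have hinr : Sum.inr a0 ∈ C 2 := by
        rcases h0 with ⟨h1, h2'⟩ | ⟨h1, h2'⟩
        · rwa [h2'] at hb
        · rwa [h1] at ha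
      have hsub2 : C 2 ⊆ {Sum.inl a0, Sum.inr a0} := by
        intro w hw
        simp only [Finset.mem_insert, Finset.mem_singleton]
        by_contra hcon
        push_neg at hcon
        obtain ⟨b0, hb0⟩ := pairlem w (Sum.inl a0) hw hinl hcon.1
        rcases hb0 with ⟨h1, h2'⟩ | ⟨h1, h2'⟩
        · exact absurd h2' (by simp)
        · have : b0 = a0 := by injection h2'.symm
          exact hcon.2 (by rw [h1, this])
      have hcard2 : (C 2).card ≤ 2 :=
        (Finset.card_le_card hsub2).trans ((Finset.card_insert_le _ _).trans (by simp))
      have h1 := indep_card_bound (C 1) (Finset.univ.erase a0) hmatch1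
        (fun i hi => Finset.mem_erase.mpr ⟨by
          rintro rfl
          have := (hmemC 1 _).mp hi
          have := (hmemC 2 _).mp hinl
          omega, Finset.mem_univ _⟩)
        (fun j hj => Finset.mem_erase.mpr ⟨by
          rintro rfl
          have := (hmemC 1 _).mp hj
          have := (hmemC 2 _).mp hinr
          omega, Finset.mem_univ _⟩)
      rw [Finset.card_erase_of_mem (Finset.mem_univ _), Finset.card_univ,
        Fintype.card_fin, max_eq_left (by omega)] at h1
      omega
  have hsplit : Finset.Icc 1 k = insert 1 (insert 2 (Finset.Icc 3 k)) := by
    ext x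
    simp only [Finset.mem_Icc, Finset.mem_insert]
    omega
  have h1n : (1:ℕ) ∉ insert 2 (Finset.Icc 3 k) := by simp
  have h2n : (2:ℕ) ∉ Finset.Icc 3 k := by simp
  rw [hsplit, Finset.sum_insert h1n, Finset.sum_insert h2n, hcardU] at hfib
  have htail : ∑ j ∈ Finset.Icc 3 k, (C j).card ≤ k - 2 := by
    calc ∑ j ∈ Finset.Icc 3 k, (C j).card ≤ ∑ _j ∈ Finset.Icc 3 k, 1 :=
          Finset.sum_le_sum (fun j hj => h3 j (Finset.mem_Icc.mp hj).1)
      _ = (Finset.Icc 3 k).card := by simp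
      _ = k - 2 := by rw [Nat.card_Icc]; omega
  omega


lemma upper_coloring {n : ℕ} (hn : 4 ≤ n) :
    IsPackingColoring (completeBipartiteMinusMatching n) (n + 1)
      (Sum.elim (fun _ => 1) (fun i : Fin n => (i : ℕ) + 2)) := by
  constructor
  · rintro (i | i)
    · exact ⟨le_refl _, by show 1 ≤ n + 1; omega⟩
    · exact ⟨by show 1 ≤ (i : ℕ) + 2; omega,
        by show (i : ℕ) + 2 ≤ n + 1; have := i.2; omega⟩
  · rintro (i | i) (j | j) hne hcc hr
    · have h0 := hr.pos_dist_of_ne hne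
      have h1 : (completeBipartiteMinusMatching n).dist (Sum.inl i) (Sum.inl j) ≠ 1 :=
        fun h => SimpleGraph.dist_eq_one_iff_adj.mp h
      simp only [Sum.elim_inl]
      omega
    · simp at hcc
    · simp at hcc
    · have : i = j := by
        simp only [Sum.elim_inr, add_left_inj] at hcc
        exact Fin.ext hcc
      exact absurd (congrArg Sum.inr this) hne
  
end Aux19

/-- For `n ≥ 4`, the graph `K_{n,n}` minus a perfect matching satisfies
`χρ(K_{n,n} - M) = n + 1`. -/
theorem packingChromaticNumber_completeBipartiteMinusMatching (n : ℕ) (hn : 4 ≤ n) :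
    packingChromaticNumber (completeBipartiteMinusMatching n) = n + 1 := by
  have hmem : n + 1 ∈ {k | ∃ c : Fin n ⊕ Fin n → ℕ,
      IsPackingColoring (completeBipartiteMinusMatching n) k c} :=
    ⟨_, Aux19.upper_coloring hn⟩
  refine le_antisymm (Nat.sInf_le hmem) (le_csInf ⟨_, hmem⟩ ?_)
  rintro k ⟨c, hc⟩
  exact Aux19.lower_bound hn k c hc
end
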